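/- arXiv:2510.09814 — 10 statements merged into one kernel-verified Lean document; each statement's English description precedes it below -/
import Mathlib

section
/- In any assignment game, if (μ, p) is a stable allocation, then μ is an optimal matching, i.e., SW(μ) = OPT. -/
open Finset

/-- A matching: a partial, injective assignment of buyers to sellers. -/
structure Matching (B S : Type*) where
  toFun : B → Option S
  inj : ∀ i i' j, toFun i = some j → toFun i' = some j → i = i'

variable {B S : Type*} [Fintype B] [Fintype S]

/-- Generated utility of a pair: `a i j = h i j - c j`. -/
def gain (h : B → S → ℝ) (c : S → ℝ) (i : B) (j : S) : ℝ := h i j - c j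

/-- Social welfare of a matching. -/
def SW (h : B → S → ℝ) (c : S → ℝ) (μ : Matching B S) : ℝ :=
  ∑ i : B, ((μ.toFun i).elim 0 (fun j => gain h c i j))

/-- Buyer utility under an allocation. -/
def buyerU (h : B → S → ℝ) (μ : Matching B S) (p : S → ℝ) (i : B) : ℝ :=
  (μ.toFun i).elim 0 (fun j => h i j - p j)

/-- Seller utility under an allocation. -/
def sellerU (c : S → ℝ) (p : S → ℝ) (j : S) : ℝ := p j - c j

/-- A seller is matched under `μ`. -/
def SellerMatched (μ : Matching B S) (j : S) : Prop := ∃ i, μ.toFun i = some j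

/-- A valid price vector: nonnegative, and equal to the seller's valuation on
unmatched sellers. -/
def ValidPrices (c : S → ℝ) (μ : Matching B S) (p : S → ℝ) : Prop :=
  (∀ j, 0 ≤ p j) ∧ (∀ j, ¬ SellerMatched μ j → p j = c j)

/-- Individual rationality of an allocation. -/
def IndivRational (h : B → S → ℝ) (c : S → ℝ) (μ : Matching B S) (p : S → ℝ) : Prop :=
  (∀ i, 0 ≤ buyerU h μ p i) ∧ (∀ j, 0 ≤ sellerU c p j)

/-- Stability of an allocation. -/
def Stable (h : B → S → ℝ) (c : S → ℝ) (μ : Matching B S) (p : S → ℝ) : Prop :=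
  IndivRational h c μ p ∧ ∀ i j, gain h c i j ≤ buyerU h μ p i + sellerU c p j

/-- The optimal (maximum) social welfare over all matchings. -/
noncomputable def OPT (h : B → S → ℝ) (c : S → ℝ) : ℝ :=
  sSup (Set.range (SW h c))

/-- `μ'` is a matching within the sub-market `(B', S')`. -/
def Within (B' : Finset B) (S' : Finset S) (μ' : Matching B S) : Prop :=
  ∀ i j, μ'.toFun i = some j → i ∈ B' ∧ j ∈ S'

/-- Subset instability of a pair of utility vectors `(u, v)`. -/
noncomputable def SIgen (h : B → S → ℝ) (c : S → ℝ) (u : B → ℝ) (v : S → ℝ) : ℝ :=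
  sSup {x | ∃ (B' : Finset B) (S' : Finset S) (μ' : Matching B S),
    Within B' S' μ' ∧ x = SW h c μ' - ((∑ i ∈ B', u i) + (∑ j ∈ S', v j))}

/-- Subset instability of an allocation. -/
noncomputable def SI (h : B → S → ℝ) (c : S → ℝ) (μ : Matching B S) (p : S → ℝ) : ℝ :=
  SIgen h c (buyerU h μ p) (sellerU c p)

section Aux
open scoped Classical
variable {B S : Type*} [Fintype B] [Fintype S]

lemma reindex_sum (μ : Matching B S) (f : S → ℝ) :
    ∑ i : B, ((μ.toFun i).elim 0 f)
      = ∑ j ∈ Finset.univ.filter (fun j => SellerMatched μ j), f j := by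
  classical
  rw [← Finset.sum_filter_of_ne (p := fun i => (μ.toFun i).isSome)
      (by intro i _ hne; cases hm : μ.toFun i with
          | none => simp [hm] at hne
          | some j => simp [hm])]
  refine Finset.sum_bij (fun i hi => (μ.toFun i).get (by simpa using hi)) ?_ ?_ ?_ ?_
  · intro i hi
    simp only [Finset.mem_filter, Finset.mem_univ, true_and]
    exact ⟨i, (Option.some_get _).symm⟩
  · intro i hi i' hi' hEq
    have h1 : μ.toFun i = some ((μ.toFun i).get (by simpa using hi)) := (Option.some_get _).symm
    have h2 : μ.toFun i' = some ((μ.toFun i').get (by simpa using hi')) := (Option.some_get _).symm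
    exact μ.inj i i' _ h1 (h2.trans (congrArg some hEq.symm))
  · intro j hj
    simp only [Finset.mem_filter, Finset.mem_univ, true_and] at hj
    obtain ⟨i, hi⟩ := hj
    refine ⟨i, by simp [hi], by simp [hi]⟩
  · intro i hi
    have hs : (μ.toFun i).isSome := by simpa using hi
    exact (congrArg (fun x : Option S => x.elim 0 f) (Option.some_get hs)).symm

lemma util_sum_eq_SW (h : B → S → ℝ) (c : S → ℝ) (μ : Matching B S) (p : S → ℝ)
    (hp : ValidPrices c μ p) :
    (∑ i : B, buyerU h μ p i) + (∑ j : S, sellerU c p j) = SW h c μ := by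
  classical
  have hsplit : ∑ j : S, sellerU c p j
      = ∑ j ∈ Finset.univ.filter (fun j => SellerMatched μ j), sellerU c p j := by
    rw [Finset.sum_filter_of_ne]
    intro j _ hne
    by_contra hm
    exact hne (by simp [sellerU, hp.2 j hm])
  rw [hsplit, ← reindex_sum μ (sellerU c p), SW, ← Finset.sum_add_distrib]
  refine Finset.sum_congr rfl fun i _ => ?_
  cases hm : μ.toFun i with
  | none => simp [buyerU, hm]
  | some j => simp [buyerU, sellerU, gain, hm]

lemma SW_le (h : B → S → ℝ) (c : S → ℝ) (μ : Matching B S) (p : S → ℝ)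
    (hstable : Stable h c μ p) (μ' : Matching B S) :
    SW h c μ' ≤ (∑ i : B, buyerU h μ p i) + (∑ j : S, sellerU c p j) := by
  classical
  have step1 : SW h c μ'
      ≤ ∑ i : B, (buyerU h μ p i + (μ'.toFun i).elim 0 (sellerU c p)) := by
    refine Finset.sum_le_sum fun i _ => ?_
    cases hm : μ'.toFun i with
    | none => simpa using hstable.1.1 i
    | some j => simpa using hstable.2 i j
  refine step1.trans ?_
  rw [Finset.sum_add_distrib]
  gcongr
  rw [reindex_sum μ' (sellerU c p)]
  refine Finset.sum_le_sum_of_subset_of_nonneg (Finset.filter_subset _ _) ?_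
  intro j _ _
  exact hstable.1.2 j
end Aux

/-- Shapley–Shubik: a stable allocation is built on an optimal matching. -/
theorem stable_implies_optimal
    {B S : Type*} [Fintype B] [Fintype S]
    (h : B → S → ℝ) (c : S → ℝ)
    (hh : ∀ i j, 0 ≤ h i j) (hc : ∀ j, 0 ≤ c j)
    (ha : ∀ i j, 0 ≤ gain h c i j)
    (μ : Matching B S) (p : S → ℝ)
    (hp : ValidPrices c μ p) (hstable : Stable h c μ p) :
    SW h c μ = OPT h c := by
  classical
  have hub : ∀ x ∈ Set.range (SW h c), x ≤ SW h c μ := by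
    rintro x ⟨μ', rfl⟩
    calc SW h c μ' ≤ (∑ i : B, buyerU h μ p i) + (∑ j : S, sellerU c p j) :=
          SW_le h c μ p hstable μ'
      _ = SW h c μ := util_sum_eq_SW h c μ p hp
  refine le_antisymm ?_ ?_
  · exact le_csSup ⟨SW h c μ, fun x hx => hub x hx⟩ ⟨μ, rfl⟩
  · exact csSup_le ⟨SW h c μ, ⟨μ, rfl⟩⟩ hub
end

section
/- Every assignment game (with nonnegative generated utilities) admits a stable allocation (μ, p); in particular, by the converse direction, its matching μ is an optimal matching. -/
open Finset

variable {B S : Type*} [Fintype B] [Fintype S]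

namespace StableAux

variable {B S : Type*}

def PInj (M : B → Option S) : Prop := ∀ i i' j, M i = some j → M i' = some j → i = i'

inductive MDReach (M1 M2 : B → Option S) : B → Prop
  | base {i j} : M2 i = some j → (∀ i', M1 i' ≠ some j) → MDReach M1 M2 i
  | step {i1 i2 j} : MDReach M1 M2 i1 → M1 i1 = some j → M2 i2 = some j → MDReach M1 M2 i2

lemma MDReach.some {M1 M2 : B → Option S} {i : B} (h : MDReach M1 M2 i) :
    ∃ j, M2 i = some j := by
  cases h with
  | base h2 _ => exact ⟨_, h2⟩
  | step _ _ h2 => exact ⟨_, h2⟩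

open Classical in
noncomputable def combine (M1 M2 : B → Option S) (i : B) : Option S :=
  if MDReach M1 M2 i then M2 i else M1 i

lemma combine_eq_or (M1 M2 : B → Option S) (i : B) :
    combine M1 M2 i = M1 i ∨ combine M1 M2 i = M2 i := by
  unfold combine; split <;> simp

lemma owner_reached {M1 M2 : B → Option S} (h1 : PInj M1) {i i' : B} {j : S}
    (hr : MDReach M1 M2 i) (h2 : M2 i = some j) (ho : M1 i' = some j) :
    MDReach M1 M2 i' := by
  cases hr with
  | base hb hn =>
      rw [hb] at h2; cases h2; exact absurd ho (hn i')
  | @step i1 _ j0 hr1 hm1 hm2 =>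
      rw [hm2] at h2; cases h2
      exact (h1 i1 i' _ hm1 ho) ▸ hr1

lemma combine_pinj {M1 M2 : B → Option S} (h1 : PInj M1) (h2 : PInj M2) :
    PInj (combine M1 M2) := by
  intro i i' j hi hi'
  unfold combine at hi hi'
  split at hi <;> split at hi'
  · exact h2 i i' j hi hi'
  · exact absurd (owner_reached h1 ‹MDReach M1 M2 i› hi hi') ‹¬ MDReach M1 M2 i'›
  · exact absurd (owner_reached h1 ‹MDReach M1 M2 i'› hi' hi) ‹¬ MDReach M1 M2 i›
  · exact h1 i i' j hi hi'

lemma combine_isSome {M1 M2 : B → Option S} {i : B} (hi : (M1 i).isSome) :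
    (combine M1 M2 i).isSome := by
  unfold combine; split
  · obtain ⟨j, hj⟩ := MDReach.some ‹_›; simp [hj]
  · exact hi

lemma combine_seller {M1 M2 : B → Option S} (h1 : PInj M1) {j : S} {i2 : B}
    (hj : M2 i2 = some j) : ∃ i, combine M1 M2 i = some j := by
  by_cases hr2 : MDReach M1 M2 i2
  · exact ⟨i2, by unfold combine; rw [if_pos hr2]; exact hj⟩
  · by_cases hown : ∃ i1, M1 i1 = some j
    · obtain ⟨i1, hi1⟩ := hown
      by_cases hr1 : MDReach M1 M2 i1
      · exact absurd (MDReach.step hr1 hi1 hj) hr2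
      · exact ⟨i1, by unfold combine; rw [if_neg hr1]; exact hi1⟩
    · push_neg at hown
      exact absurd (MDReach.base hj hown) hr2

section Graph

open Classical in
noncomputable def graphM1 {P : B → Prop} (f : {i // P i} → S) : B → Option S :=
  fun i => if hi : P i then some (f ⟨i, hi⟩) else none

lemma graphM1_eq {P : B → Prop} {f : {i // P i} → S} {i : B} {j : S}
    (hij : graphM1 f i = some j) : ∃ hi : P i, f ⟨i, hi⟩ = j := by
  unfold graphM1 at hij
  split at hij
  · exact ⟨‹_›, Option.some.inj hij⟩
  · exact nomatch hij

lemma graphM1_pinj {P : B → Prop} {f : {i // P i} → S} (hf : Function.Injective f) :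
    PInj (graphM1 f) := by
  intro i i' j hi hi'
  obtain ⟨h1, e1⟩ := graphM1_eq hi
  obtain ⟨h2, e2⟩ := graphM1_eq hi'
  have := hf (e1.trans e2.symm)
  exact congrArg Subtype.val this

lemma graphM1_isSome {P : B → Prop} {f : {i // P i} → S} {i : B} (hi : P i) :
    (graphM1 f i).isSome := by
  unfold graphM1; rw [dif_pos hi]; rfl

open Classical in
noncomputable def graphM2 {Q : S → Prop} (f : {j // Q j} → B) : B → Option S :=
  fun i => if hi : ∃ x : {j // Q j}, f x = i then some (Classical.choose hi).1 else none

lemma graphM2_eq {Q : S → Prop} {f : {j // Q j} → B} {i : B} {j : S}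
    (hij : graphM2 f i = some j) : ∃ hj : Q j, f ⟨j, hj⟩ = i := by
  unfold graphM2 at hij
  split at hij
  · rename_i hex
    have h1 := Classical.choose_spec hex
    have h2 : (Classical.choose hex).1 = j := Option.some.inj hij
    have hj : Q j := h2 ▸ (Classical.choose hex).2
    refine ⟨hj, ?_⟩
    have : (⟨j, hj⟩ : {j // Q j}) = Classical.choose hex := Subtype.ext h2.symm
    rw [this]; exact h1
  · exact nomatch hij

lemma graphM2_pinj {Q : S → Prop} (f : {j // Q j} → B) : PInj (graphM2 f) := by
  intro i i' j hi hi'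
  obtain ⟨h1, e1⟩ := graphM2_eq hi
  obtain ⟨h2, e2⟩ := graphM2_eq hi'
  rw [← e1, ← e2]

lemma graphM2_saturate {Q : S → Prop} {f : {j // Q j} → B} (hf : Function.Injective f)
    {j : S} (hj : Q j) : graphM2 f (f ⟨j, hj⟩) = some j := by
  have hex : ∃ x : {j // Q j}, f x = f ⟨j, hj⟩ := ⟨⟨j, hj⟩, rfl⟩
  unfold graphM2
  rw [dif_pos hex]
  have := hf (Classical.choose_spec hex)
  rw [this]

end Graph

end StableAux

namespace StableAux

variable {B S : Type*} [Fintype B] [Fintype S]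

section U
variable [Nonempty S]

noncomputable def ustar (h : B → S → ℝ) (p : S → ℝ) (i : B) : ℝ :=
  max 0 ((univ : Finset S).sup' univ_nonempty fun j => h i j - p j)

lemma ustar_nonneg (h : B → S → ℝ) (p : S → ℝ) (i : B) : 0 ≤ ustar h p i := le_max_left _ _

lemma le_ustar (h : B → S → ℝ) (p : S → ℝ) (i : B) (j : S) : h i j - p j ≤ ustar h p i :=
  le_trans (le_sup' (fun j => h i j - p j) (mem_univ j)) (le_max_right _ _)

lemma ustar_le (h : B → S → ℝ) (p : S → ℝ) (i : B) {a : ℝ} (h0 : 0 ≤ a)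
    (hj : ∀ j, h i j - p j ≤ a) : ustar h p i ≤ a :=
  max_le h0 (sup'_le _ _ fun j _ => hj j)

lemma ustar_continuous (h : B → S → ℝ) (i : B) : Continuous fun p : S → ℝ => ustar h p i := by
  apply Continuous.max continuous_const
  exact Continuous.finset_sup'_apply (univ_nonempty (α := S)) (f := fun j (p : S → ℝ) => h i j - p j)
    (fun j _ => continuous_const.sub (continuous_apply j))

noncomputable def gdual (h : B → S → ℝ) (c : S → ℝ) (p : S → ℝ) : ℝ :=
  (∑ i, ustar h p i) + ∑ j, (p j - c j)

lemma gdual_continuous (h : B → S → ℝ) (c : S → ℝ) : Continuous (gdual h c) := by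
  apply Continuous.add
  · exact continuous_finset_sum _ fun i _ => ustar_continuous h i
  · exact continuous_finset_sum _ fun j _ => (continuous_apply j).sub continuous_const

end U

/-- reindexing: sum over buyers of a seller-indexed weight. -/
lemma sum_option_le [Nonempty S] (ν : Matching B S) {w : S → ℝ} (hw : ∀ j, 0 ≤ w j) :
    ∑ i, ((ν.toFun i).elim 0 w) ≤ ∑ j, w j := by
  classical
  set A : Finset B := univ.filter (fun i => (ν.toFun i).isSome) with hA
  set f : B → S := fun i => (ν.toFun i).getD (Classical.arbitrary S) with hf
  have h1 : ∑ i, ((ν.toFun i).elim 0 w) = ∑ i ∈ A, w (f i) := by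
    rw [← Finset.sum_filter_of_ne (p := fun i => (ν.toFun i).isSome)]
    · apply Finset.sum_congr rfl
      intro i hi
      simp only [mem_filter] at hi
      obtain ⟨j, hj⟩ := Option.isSome_iff_exists.1 hi.2
      simp [hf, hj]
    · intro i _ hne
      cases hv : ν.toFun i with
      | none => simp [hv] at hne
      | some j => simp [hv]
  rw [h1]
  have hinj : ∀ i ∈ A, ∀ i' ∈ A, f i = f i' → i = i' := by
    intro i hi i' hi' he
    simp only [hA, mem_filter] at hi hi'
    obtain ⟨j, hj⟩ := Option.isSome_iff_exists.1 hi.2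
    obtain ⟨j', hj'⟩ := Option.isSome_iff_exists.1 hi'.2
    simp only [hf, hj, hj', Option.getD_some] at he
    exact ν.inj i i' j hj (he ▸ hj')
  calc ∑ i ∈ A, w (f i) = ∑ j ∈ A.image f, w j := (Finset.sum_image hinj).symm
    _ ≤ ∑ j, w j := Finset.sum_le_sum_of_subset_of_nonneg (subset_univ _)
        (fun j _ _ => hw j)

lemma sum_option_eq [Nonempty S] (ν : Matching B S) {w : S → ℝ}
    (hw : ∀ j, ¬ SellerMatched ν j → w j = 0) :
    ∑ i, ((ν.toFun i).elim 0 w) = ∑ j, w j := by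
  classical
  set A : Finset B := univ.filter (fun i => (ν.toFun i).isSome) with hA
  set f : B → S := fun i => (ν.toFun i).getD (Classical.arbitrary S) with hf
  have h1 : ∑ i, ((ν.toFun i).elim 0 w) = ∑ i ∈ A, w (f i) := by
    rw [← Finset.sum_filter_of_ne (p := fun i => (ν.toFun i).isSome)]
    · apply Finset.sum_congr rfl
      intro i hi
      simp only [mem_filter] at hi
      obtain ⟨j, hj⟩ := Option.isSome_iff_exists.1 hi.2
      simp [hf, hj]
    · intro i _ hne
      cases hv : ν.toFun i with
      | none => simp [hv] at hne
      | some j => simp [hv]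
  have hinj : ∀ i ∈ A, ∀ i' ∈ A, f i = f i' → i = i' := by
    intro i hi i' hi' he
    simp only [hA, mem_filter] at hi hi'
    obtain ⟨j, hj⟩ := Option.isSome_iff_exists.1 hi.2
    obtain ⟨j', hj'⟩ := Option.isSome_iff_exists.1 hi'.2
    simp only [hf, hj, hj', Option.getD_some] at he
    exact ν.inj i i' j hj (he ▸ hj')
  rw [h1, ← Finset.sum_image hinj]
  apply Finset.sum_subset (subset_univ _)
  intro j _ hj
  apply hw
  rintro ⟨i, hi⟩
  apply hj
  simp only [Finset.mem_image]
  exact ⟨i, by simp [hA, hi], by simp [hf, hi]⟩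

end StableAux

namespace StableAux
variable {B S : Type*} [Fintype B] [Fintype S] [Nonempty S]

lemma exists_eps {ι : Type*} [Finite ι] (f : ι → ℝ) (hf : ∀ i, 0 < f i) :
    ∃ ε : ℝ, 0 < ε ∧ ε ≤ 1 ∧ ∀ i, ε ≤ f i := by
  rcases isEmpty_or_nonempty ι with he | hne
  · exact ⟨1, by norm_num, le_rfl, fun i => isEmptyElim i⟩
  · obtain ⟨i0, hi0⟩ := Finite.exists_min f
    exact ⟨min 1 (f i0), lt_min one_pos (hf i0), min_le_left _ _,
      fun i => (min_le_right _ _).trans (hi0 i)⟩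

lemma hall_buyer [DecidableEq B] [DecidableEq S] (h : B → S → ℝ) (c : S → ℝ) (q p : S → ℝ)
    (hq : ∀ i j, h i j + 1 ≤ q j)
    (hlow : ∀ j, c j ≤ p j) (hup : ∀ j, p j ≤ q j)
    (hmin : ∀ p' ∈ Set.Icc c q, gdual h c p ≤ gdual h c p')
    (X : Finset B) (hX : ∀ i ∈ X, 0 < ustar h p i) :
    X.card ≤ (X.biUnion (fun i => univ.filter (fun j => h i j - p j = ustar h p i))).card := by
  classical
  set u : B → ℝ := ustar h p with hu
  set Y : Finset S := X.biUnion (fun i => univ.filter (fun j => h i j - p j = u i)) with hY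
  -- choose ε
  obtain ⟨ε, hεpos, hε1, hεall⟩ := exists_eps
    (ι := {i : B // i ∈ X} ⊕ {ij : B × S // ij.1 ∈ X ∧ h ij.1 ij.2 - p ij.2 ≠ u ij.1})
    (Sum.elim (fun i => u i.1) (fun ij => u ij.1.1 - (h ij.1.1 ij.1.2 - p ij.1.2)))
    (by
      rintro (⟨i, hi⟩ | ⟨⟨i, j⟩, hi, hne⟩) <;> simp only [Sum.elim_inl, Sum.elim_inr]
      · exact hX i hi
      · have := le_ustar h p i j
        rw [← hu] at this
        exact sub_pos.2 (lt_of_le_of_ne this hne))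
  have hεu : ∀ i ∈ X, ε ≤ u i := fun i hi => hεall (Sum.inl ⟨i, hi⟩)
  have hεgap : ∀ i ∈ X, ∀ j, h i j - p j ≠ u i → ε ≤ u i - (h i j - p j) :=
    fun i hi j hne => hεall (Sum.inr ⟨(i, j), hi, hne⟩)
  -- perturbed prices
  set p' : S → ℝ := fun j => if j ∈ Y then p j + ε else p j with hp'
  have hp'mem : p' ∈ Set.Icc c q := by
    rw [Set.mem_Icc]
    constructor
    · intro j
      simp only [hp']
      split
      · linarith [hlow j]
      · exact hlow j
    · intro j
      simp only [hp']
      split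
      · rename_i hjY
        obtain ⟨i, hi, hj⟩ := mem_biUnion.1 (hY ▸ hjY)
        have htight : h i j - p j = u i := (mem_filter.1 hj).2
        have : p j ≤ h i j := by
          have := ustar_nonneg h p i; rw [← hu] at this; linarith
        linarith [hq i j]
      · exact hup j
  have hple : ∀ j, p j ≤ p' j := by
    intro j; simp only [hp']; split <;> linarith
  -- new utilities
  have hub : ∀ i, ustar h p' i ≤ u i := by
    intro i
    refine ustar_le h p' i (by rw [hu]; exact ustar_nonneg h p i) fun j => ?_
    have := le_ustar h p i j; rw [← hu] at this
    linarith [hple j]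
  have hubX : ∀ i ∈ X, ustar h p' i ≤ u i - ε := by
    intro i hi
    refine ustar_le h p' i (by linarith [hεu i hi]) fun j => ?_
    by_cases ht : h i j - p j = u i
    · have hjY : j ∈ Y := by
        rw [hY]; exact mem_biUnion.2 ⟨i, hi, mem_filter.2 ⟨mem_univ j, ht⟩⟩
      simp only [hp', if_pos hjY]
      linarith
    · have := hεgap i hi j ht
      have := hple j
      linarith
  -- sum comparisons
  have hsum1 : ∑ i, ustar h p' i ≤ (∑ i, u i) - ε * X.card := by
    have : ∑ i, ustar h p' i ≤ ∑ i, (u i - if i ∈ X then ε else 0) := by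
      apply Finset.sum_le_sum
      intro i _
      by_cases hi : i ∈ X
      · simp only [if_pos hi]; exact hubX i hi
      · simp only [if_neg hi, sub_zero]; exact hub i
    refine this.trans_eq ?_
    rw [Finset.sum_sub_distrib]
    congr 1
    rw [Finset.sum_ite_mem, Finset.univ_inter, Finset.sum_const, nsmul_eq_mul, mul_comm]
  have hsum2 : ∑ j, (p' j - c j) = (∑ j, (p j - c j)) + ε * Y.card := by
    have : ∀ j, p' j - c j = (p j - c j) + (if j ∈ Y then ε else 0) := by
      intro j; simp only [hp']; split <;> ring
    simp_rw [this]
    rw [Finset.sum_add_distrib]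
    congr 1
    rw [Finset.sum_ite_mem, Finset.univ_inter, Finset.sum_const, nsmul_eq_mul, mul_comm]
  have hkey := hmin p' hp'mem
  rw [gdual, gdual] at hkey
  have : ε * (X.card : ℝ) ≤ ε * (Y.card : ℝ) := by linarith
  have := le_of_mul_le_mul_left (by linarith : ε * (X.card:ℝ) ≤ ε * (Y.card:ℝ)) hεpos
  exact_mod_cast this

lemma hall_seller [DecidableEq B] [DecidableEq S] (h : B → S → ℝ) (c : S → ℝ) (q p : S → ℝ)
    (hlow : ∀ j, c j ≤ p j) (hup : ∀ j, p j ≤ q j)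
    (hmin : ∀ p' ∈ Set.Icc c q, gdual h c p ≤ gdual h c p')
    (Y : Finset S) (hY : ∀ j ∈ Y, c j < p j) :
    Y.card ≤ (Y.biUnion (fun j => univ.filter (fun i => h i j - p j = ustar h p i))).card := by
  classical
  set u : B → ℝ := ustar h p with hu
  set N : Finset B := Y.biUnion (fun j => univ.filter (fun i => h i j - p j = u i)) with hN
  obtain ⟨ε, hεpos, hε1, hεall⟩ := exists_eps
    (ι := {j : S // j ∈ Y} ⊕ {ij : B × S // ij.2 ∈ Y ∧ h ij.1 ij.2 - p ij.2 ≠ u ij.1})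
    (Sum.elim (fun j => p j.1 - c j.1) (fun ij => u ij.1.1 - (h ij.1.1 ij.1.2 - p ij.1.2)))
    (by
      rintro (⟨j, hj⟩ | ⟨⟨i, j⟩, hj, hne⟩) <;> simp only [Sum.elim_inl, Sum.elim_inr]
      · linarith [hY j hj]
      · have := le_ustar h p i j
        rw [← hu] at this
        exact sub_pos.2 (lt_of_le_of_ne this hne))
  have hεv : ∀ j ∈ Y, ε ≤ p j - c j := fun j hj => hεall (Sum.inl ⟨j, hj⟩)
  have hεgap : ∀ (i : B), ∀ j ∈ Y, h i j - p j ≠ u i → ε ≤ u i - (h i j - p j) :=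
    fun i j hj hne => hεall (Sum.inr ⟨(i, j), hj, hne⟩)
  set p' : S → ℝ := fun j => if j ∈ Y then p j - ε else p j with hp'
  have hp'mem : p' ∈ Set.Icc c q := by
    rw [Set.mem_Icc]
    constructor
    · intro j
      simp only [hp']
      split
      · rename_i hj; linarith [hεv j hj]
      · exact hlow j
    · intro j
      simp only [hp']
      split
      · linarith [hup j, hεpos]
      · exact hup j
  have hple : ∀ j, p j - ε ≤ p' j := by
    intro j; simp only [hp']; split <;> linarith
  have hub : ∀ i, ustar h p' i ≤ u i + if i ∈ N then ε else 0 := by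
    intro i
    by_cases hi : i ∈ N
    · rw [if_pos hi]
      refine ustar_le h p' i (by linarith [hu ▸ ustar_nonneg h p i]) fun j => ?_
      have h1 := le_ustar h p i j
      rw [← hu] at h1
      linarith [hple j]
    · rw [if_neg hi, add_zero]
      refine ustar_le h p' i (hu ▸ ustar_nonneg h p i) fun j => ?_
      have h1 := le_ustar h p i j
      rw [← hu] at h1
      by_cases hjY : j ∈ Y
      · have hne : h i j - p j ≠ u i := by
          intro hcon
          exact hi (hN ▸ mem_biUnion.2 ⟨j, hjY, mem_filter.2 ⟨mem_univ i, hcon⟩⟩)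
        have := hεgap i j hjY hne
        simp only [hp', if_pos hjY]
        linarith
      · simp only [hp', if_neg hjY]
        exact h1
  have hsum1 : ∑ i, ustar h p' i ≤ (∑ i, u i) + ε * N.card := by
    have : ∑ i, ustar h p' i ≤ ∑ i, (u i + if i ∈ N then ε else 0) :=
      Finset.sum_le_sum fun i _ => hub i
    refine this.trans_eq ?_
    rw [Finset.sum_add_distrib]
    congr 1
    rw [Finset.sum_ite_mem, Finset.univ_inter, Finset.sum_const, nsmul_eq_mul, mul_comm]
  have hsum2 : ∑ j, (p' j - c j) = (∑ j, (p j - c j)) - ε * Y.card := by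
    have : ∀ j, p' j - c j = (p j - c j) - (if j ∈ Y then ε else 0) := by
      intro j; simp only [hp']; split <;> ring
    simp_rw [this]
    rw [Finset.sum_sub_distrib]
    congr 1
    rw [Finset.sum_ite_mem, Finset.univ_inter, Finset.sum_const, nsmul_eq_mul, mul_comm]
  have hkey := hmin p' hp'mem
  rw [gdual, gdual] at hkey
  have : ε * (Y.card : ℝ) ≤ ε * (N.card : ℝ) := by linarith
  have := le_of_mul_le_mul_left this hεpos
  exact_mod_cast this


end StableAux

/-- Every assignment game admits a stable allocation, whose matching is optimal. -/
theorem exists_stable_allocation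
    {B S : Type*} [Fintype B] [Fintype S]
    (h : B → S → ℝ) (c : S → ℝ)
    (hh : ∀ i j, 0 ≤ h i j) (hc : ∀ j, 0 ≤ c j)
    (ha : ∀ i j, 0 ≤ gain h c i j) :
    ∃ (μ : Matching B S) (p : S → ℝ),
      ValidPrices c μ p ∧ Stable h c μ p ∧ SW h c μ = OPT h c := by
  classical
  rcases isEmpty_or_nonempty S with hS | hS
  · -- trivial case: no sellers
    have hnone : ∀ (o : Option S), o = none := by
      intro o; cases o with
      | none => rfl
      | some j => exact isEmptyElim j
    have μ0 : Matching B S := ⟨fun _ => none, fun i i' j h1 _ => nomatch h1⟩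
    have hSW : ∀ ν : Matching B S, SW h c ν = 0 := by
      intro ν
      rw [SW]
      apply Finset.sum_eq_zero
      intro i _
      rw [hnone (ν.toFun i)]
      rfl
    refine ⟨μ0, c, ⟨hc, fun j _ => rfl⟩, ⟨⟨?_, ?_⟩, ?_⟩, ?_⟩
    · intro i; rw [buyerU, hnone (μ0.toFun i)]; exact le_refl 0
    · intro j; rw [sellerU]; simp
    · intro i j; exact isEmptyElim j
    · have hrange : Set.range (SW h c) = {0} := by
        ext x
        simp only [Set.mem_range, Set.mem_singleton_iff]
        constructor
        · rintro ⟨ν, rfl⟩; exact hSW ν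
        · rintro rfl; exact ⟨μ0, hSW μ0⟩
      rw [OPT, hrange, csSup_singleton]
      exact hSW μ0
  · -- main case
    set q : S → ℝ := fun j => c j + 1 + ∑ i, h i j with hqdef
    have hq : ∀ i j, h i j + 1 ≤ q j := by
      intro i j
      have h1 : h i j ≤ ∑ i', h i' j :=
        Finset.single_le_sum (fun i' _ => hh i' j) (Finset.mem_univ i)
      have := hc j
      simp only [hqdef]
      linarith
    have hcq : c ≤ q := by
      intro j
      have : (0:ℝ) ≤ ∑ i, h i j := Finset.sum_nonneg fun i _ => hh i j
      simp only [hqdef]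
      linarith
    obtain ⟨p, hpK, hpmin'⟩ := (isCompact_Icc (a := c) (b := q)).exists_isMinOn
      ⟨c, Set.mem_Icc.2 ⟨le_rfl, hcq⟩⟩ (StableAux.gdual_continuous h c).continuousOn
    have hmin : ∀ p' ∈ Set.Icc c q, StableAux.gdual h c p ≤ StableAux.gdual h c p' :=
      fun p' hp' => hpmin' hp'
    rw [Set.mem_Icc] at hpK
    have hlow : ∀ j, c j ≤ p j := fun j => hpK.1 j
    have hup : ∀ j, p j ≤ q j := fun j => hpK.2 j
    -- Hall condition, buyers' side
    have hallB : ∀ s : Finset {i : B // 0 < StableAux.ustar h p i},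
        s.card ≤ (s.biUnion (fun i =>
          Finset.univ.filter (fun j => h i.1 j - p j = StableAux.ustar h p i.1))).card := by
      intro s
      have h1 : s.card = (s.image Subtype.val).card :=
        (Finset.card_image_of_injective s Subtype.val_injective).symm
      have h2 : s.biUnion (fun i =>
            Finset.univ.filter (fun j => h i.1 j - p j = StableAux.ustar h p i.1))
          = (s.image Subtype.val).biUnion (fun i =>
            Finset.univ.filter (fun j => h i j - p j = StableAux.ustar h p i)) := by
        ext j
        simp only [Finset.mem_biUnion, Finset.mem_image, Finset.mem_filter, Finset.mem_univ,
          true_and]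
        constructor
        · rintro ⟨i, hi, hj⟩; exact ⟨i.1, ⟨i, hi, rfl⟩, hj⟩
        · rintro ⟨i, ⟨i', hi', rfl⟩, hj⟩; exact ⟨i', hi', hj⟩
      rw [h1, h2]
      refine StableAux.hall_buyer h c q p hq hlow hup hmin (s.image Subtype.val) ?_
      intro i hi
      obtain ⟨i', _, rfl⟩ := Finset.mem_image.1 hi
      exact i'.2
    obtain ⟨f1, hf1inj, hf1⟩ :=
      (Finset.all_card_le_biUnion_card_iff_exists_injective _).1 hallB
    have hf1t : ∀ x : {i : B // 0 < StableAux.ustar h p i},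
        h x.1 (f1 x) - p (f1 x) = StableAux.ustar h p x.1 :=
      fun x => (Finset.mem_filter.1 (hf1 x)).2
    -- Hall condition, sellers' side
    have hallS : ∀ s : Finset {j : S // c j < p j},
        s.card ≤ (s.biUnion (fun j =>
          Finset.univ.filter (fun i => h i j.1 - p j.1 = StableAux.ustar h p i))).card := by
      intro s
      have h1 : s.card = (s.image Subtype.val).card :=
        (Finset.card_image_of_injective s Subtype.val_injective).symm
      have h2 : s.biUnion (fun j =>
            Finset.univ.filter (fun i => h i j.1 - p j.1 = StableAux.ustar h p i))
          = (s.image Subtype.val).biUnion (fun j =>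
            Finset.univ.filter (fun i => h i j - p j = StableAux.ustar h p i)) := by
        ext i
        simp only [Finset.mem_biUnion, Finset.mem_image, Finset.mem_filter, Finset.mem_univ,
          true_and]
        constructor
        · rintro ⟨j, hj, hi⟩; exact ⟨j.1, ⟨j, hj, rfl⟩, hi⟩
        · rintro ⟨j, ⟨j', hj', rfl⟩, hi⟩; exact ⟨j', hj', hi⟩
      rw [h1, h2]
      refine StableAux.hall_seller h c q p hlow hup hmin (s.image Subtype.val) ?_
      intro j hj
      obtain ⟨j', _, rfl⟩ := Finset.mem_image.1 hj
      exact j'.2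
    obtain ⟨f2, hf2inj, hf2⟩ :=
      (Finset.all_card_le_biUnion_card_iff_exists_injective _).1 hallS
    have hf2t : ∀ x : {j : S // c j < p j},
        h (f2 x) x.1 - p x.1 = StableAux.ustar h p (f2 x) :=
      fun x => (Finset.mem_filter.1 (hf2 x)).2
    -- build the two partial matchings and combine them
    set M1 : B → Option S := StableAux.graphM1 f1 with hM1
    set M2 : B → Option S := StableAux.graphM2 f2 with hM2
    have pinj1 : StableAux.PInj M1 := StableAux.graphM1_pinj hf1inj
    have pinj2 : StableAux.PInj M2 := StableAux.graphM2_pinj f2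
    set μ : Matching B S := ⟨StableAux.combine M1 M2, StableAux.combine_pinj pinj1 pinj2⟩
      with hμ
    -- tightness of matched pairs
    have htight : ∀ i j, μ.toFun i = some j → h i j - p j = StableAux.ustar h p i := by
      intro i j hij
      have : M1 i = some j ∨ M2 i = some j := by
        rcases StableAux.combine_eq_or M1 M2 i with he | he
        · exact Or.inl (he ▸ hij)
        · exact Or.inr (he ▸ hij)
      rcases this with he | he
      · obtain ⟨hi, rfl⟩ := StableAux.graphM1_eq he
        exact hf1t ⟨i, hi⟩
      · obtain ⟨hj, hfe⟩ := StableAux.graphM2_eq he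
        have := hf2t ⟨j, hj⟩
        rw [hfe] at this
        exact this
    -- buyers with positive utility are matched
    have hbmatch : ∀ i : B, 0 < StableAux.ustar h p i → (μ.toFun i).isSome := by
      intro i hi
      exact StableAux.combine_isSome (StableAux.graphM1_isSome hi)
    -- sellers with positive utility are matched
    have hsmatch : ∀ j : S, c j < p j → SellerMatched μ j := by
      intro j hj
      exact StableAux.combine_seller pinj1 (StableAux.graphM2_saturate hf2inj hj)
    -- buyer utilities agree with the dual utilities
    have hbuyerU : ∀ i, buyerU h μ p i = StableAux.ustar h p i := by
      intro i
      cases hm : μ.toFun i with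
      | some j =>
        have ht := htight i j hm
        rw [buyerU, hm]
        exact ht
      | none =>
        have h0 : ¬ 0 < StableAux.ustar h p i := by
          intro hpos
          have := hbmatch i hpos
          rw [hm] at this
          simp at this
        have : StableAux.ustar h p i = 0 :=
          le_antisymm (not_lt.1 h0) (StableAux.ustar_nonneg h p i)
        rw [buyerU, hm, this]
        rfl
    have hvalid : ValidPrices c μ p := by
      refine ⟨fun j => (hc j).trans (hlow j), fun j hj => ?_⟩
      by_contra hne
      exact hj (hsmatch j (lt_of_le_of_ne (hlow j) (Ne.symm hne)))
    -- SW μ equals the dual objective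
    have hSWμ : SW h c μ = StableAux.gdual h c p := by
      have hterm : ∀ i, ((μ.toFun i).elim 0 (fun j => gain h c i j))
          = StableAux.ustar h p i + ((μ.toFun i).elim 0 (fun j => p j - c j)) := by
        intro i
        cases hm : μ.toFun i with
        | some j =>
          have ht := htight i j hm
          simp only [hm, Option.elim_some, gain]
          linarith
        | none =>
          have := hbuyerU i
          rw [buyerU, hm] at this
          simp only [hm, Option.elim_none, ← this]
          ring
        -- done
      rw [SW]
      calc ∑ i, ((μ.toFun i).elim 0 (fun j => gain h c i j))
          = ∑ i, (StableAux.ustar h p i + ((μ.toFun i).elim 0 (fun j => p j - c j))) :=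
            Finset.sum_congr rfl fun i _ => hterm i
        _ = (∑ i, StableAux.ustar h p i) + ∑ i, ((μ.toFun i).elim 0 (fun j => p j - c j)) :=
            Finset.sum_add_distrib
        _ = (∑ i, StableAux.ustar h p i) + ∑ j, (p j - c j) := by
            congr 1
            exact StableAux.sum_option_eq μ (fun j hj => by rw [hvalid.2 j hj]; ring)
        _ = StableAux.gdual h c p := rfl
    -- weak duality
    have hweak : ∀ ν : Matching B S, SW h c ν ≤ StableAux.gdual h c p := by
      intro ν
      have hterm : ∀ i, ((ν.toFun i).elim 0 (fun j => gain h c i j))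
          ≤ StableAux.ustar h p i + ((ν.toFun i).elim 0 (fun j => p j - c j)) := by
        intro i
        cases hm : ν.toFun i with
        | some j =>
          have := StableAux.le_ustar h p i j
          simp only [hm, Option.elim_some, gain]
          linarith
        | none =>
          simp only [hm, Option.elim_none, add_zero]
          exact StableAux.ustar_nonneg h p i
      calc SW h c ν
          ≤ ∑ i, (StableAux.ustar h p i + ((ν.toFun i).elim 0 (fun j => p j - c j))) :=
            Finset.sum_le_sum fun i _ => hterm i
        _ = (∑ i, StableAux.ustar h p i) + ∑ i, ((ν.toFun i).elim 0 (fun j => p j - c j)) :=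
            Finset.sum_add_distrib
        _ ≤ (∑ i, StableAux.ustar h p i) + ∑ j, (p j - c j) := by
            have := StableAux.sum_option_le ν (w := fun j => p j - c j)
              (fun j => sub_nonneg.2 (hlow j))
            linarith
        _ = StableAux.gdual h c p := rfl
    refine ⟨μ, p, hvalid, ⟨⟨?_, ?_⟩, ?_⟩, ?_⟩
    · intro i
      rw [hbuyerU i]
      exact StableAux.ustar_nonneg h p i
    · intro j
      rw [sellerU]
      exact sub_nonneg.2 (hlow j)
    · intro i j
      rw [hbuyerU i, sellerU, gain]
      have := StableAux.le_ustar h p i j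
      linarith
    · have hbdd : BddAbove (Set.range (SW h c)) := by
        refine ⟨StableAux.gdual h c p, ?_⟩
        rintro x ⟨ν, rfl⟩
        exact hweak ν
      refine le_antisymm (le_csSup hbdd ⟨μ, rfl⟩) (csSup_le ⟨SW h c μ, μ, rfl⟩ ?_)
      rintro x ⟨ν, rfl⟩
      rw [hSWμ]
      exact hweak ν
end

section
/- For any allocation (μ, p) of an assignment game, the minimum stabilizing subsidy is equal to the subset instability SI(μ, p). -/
open Finset

variable {B S : Type*} [Fintype B] [Fintype S]

/-- The minimum stabilizing subsidy of an allocation: the least total utility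
injection making the allocation stable. -/
noncomputable def minSubsidy (h : B → S → ℝ) (c : S → ℝ) (μ : Matching B S)
    (p : S → ℝ) : ℝ :=
  sInf {x | ∃ (τ : B → ℝ) (η : S → ℝ),
    (∀ i, 0 ≤ τ i) ∧ (∀ j, 0 ≤ η j) ∧
    (∀ i, 0 ≤ buyerU h μ p i + τ i) ∧ (∀ j, 0 ≤ sellerU c p j + η j) ∧
    (∀ i j, gain h c i j ≤ buyerU h μ p i + τ i + (sellerU c p j + η j)) ∧
    x = (∑ i : B, τ i) + (∑ j : S, η j)}

section AuxLemmas

open Classical in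
/-- Summing an `Option.elim 0 g` over buyers equals summing `g` over matched sellers. -/
lemma sum_elim_matched {B S : Type*} [Fintype B] [Fintype S]
    (M : B → Option S)
    (inj : ∀ i i' j, M i = some j → M i' = some j → i = i') (g : S → ℝ) :
    ∑ i, (M i).elim 0 g
      = ∑ j ∈ Finset.univ.filter (fun j => ∃ i, M i = some j), g j := by
  classical
  have step1 : ∀ i : B, (M i).elim 0 g = ∑ j, (if M i = some j then g j else 0) := by
    intro i
    cases hMi : M i with
    | none => simp
    | some j0 => simp [Finset.sum_ite_eq]
  rw [Finset.sum_congr rfl (fun i _ => step1 i), Finset.sum_comm, Finset.sum_filter]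
  refine Finset.sum_congr rfl (fun j _ => ?_)
  by_cases hj : ∃ i, M i = some j
  · obtain ⟨i0, hi0⟩ := hj
    rw [if_pos ⟨i0, hi0⟩, Finset.sum_eq_single i0]
    · rw [if_pos hi0]
    · intro b _ hb
      rw [if_neg]
      intro hcon
      exact hb (inj b i0 j hcon hi0)
    · intro hcon; exact absurd (Finset.mem_univ i0) hcon
  · rw [if_neg hj]
    apply Finset.sum_eq_zero
    intro i _
    rw [if_neg (fun hc => hj ⟨i, hc⟩)]

/-- Square Egerváry-type lemma: there is a feasible dual pair whose total value is
attained by some permutation. -/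
lemma egervary_square {T : Type*} [Fintype T] (w : T → T → ℝ) :
    ∃ (τ η : T → ℝ) (σ : Equiv.Perm T),
      (∀ i j, w i j ≤ τ i + η j) ∧ (∑ i, τ i) + (∑ j, η j) = ∑ i, w i (σ i) := by
  classical
  rcases isEmpty_or_nonempty T with hT | hT
  · exact ⟨0, 0, 1, fun i => isEmptyElim i, by simp⟩
  have hne : (Finset.univ : Finset T).Nonempty := Finset.univ_nonempty
  set n : ℕ := Fintype.card T with hn
  set F : (T → ℝ) → ℝ :=
    fun ηx => (∑ i, Finset.univ.sup' hne (fun j => w i j - ηx j)) + ∑ j, ηx j with hF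
  have hFcont : Continuous F := by
    apply Continuous.add
    · apply continuous_finset_sum
      intro i _
      exact Continuous.finset_sup'_apply hne
        (fun j _ => continuous_const.sub (continuous_apply j))
    · exact continuous_finset_sum _ (fun j _ => continuous_apply j)
  set m : ℝ := Finset.univ.inf' hne (fun i => Finset.univ.inf' hne (fun j => w i j)) with hm
  have hmle : ∀ i j, m ≤ w i j := by
    intro i j
    calc m ≤ Finset.univ.inf' hne (fun j => w i j) := Finset.inf'_le _ (Finset.mem_univ i)
    _ ≤ w i j := Finset.inf'_le _ (Finset.mem_univ j)
  set K : ℝ := max (F 0 - n * m + 1) 0 with hK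
  have hK0 : 0 ≤ K := le_max_right _ _
  have hK1 : F 0 - n * m + 1 ≤ K := le_max_left _ _
  set box : Set (T → ℝ) := Set.univ.pi (fun _ => Set.Icc 0 K) with hbox
  have hboxc : IsCompact box := isCompact_univ_pi (fun _ => isCompact_Icc)
  have h0box : (0 : T → ℝ) ∈ box := by
    intro j _; exact ⟨le_refl 0, hK0⟩
  obtain ⟨η0, hη0box, hη0min⟩ := hboxc.exists_isMinOn ⟨0, h0box⟩ hFcont.continuousOn
  have hglobal : ∀ ηx : T → ℝ, F η0 ≤ F ηx := by
    intro ηx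
    set cmin : ℝ := Finset.univ.inf' hne ηx with hc
    set ηy : T → ℝ := fun j => ηx j - cmin with hηy
    have hηy0 : ∀ j, 0 ≤ ηy j := by
      intro j
      have : cmin ≤ ηx j := Finset.inf'_le _ (Finset.mem_univ j)
      simp only [hηy]; linarith
    have hFeq : F ηy = F ηx := by
      have h1 : ∀ i, Finset.univ.sup' hne (fun j => w i j - ηy j)
          = Finset.univ.sup' hne (fun j => w i j - ηx j) + cmin := by
        intro i
        rw [Finset.sup'_add Finset.univ (fun j => w i j - ηx j) cmin hne]
        exact Finset.sup'_congr hne rfl (fun j _ => by simp only [hηy]; ring)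
      have h2 : ∑ i, Finset.univ.sup' hne (fun j => w i j - ηy j)
          = (∑ i, Finset.univ.sup' hne (fun j => w i j - ηx j)) + n * cmin := by
        rw [Finset.sum_congr rfl (fun i _ => h1 i), Finset.sum_add_distrib,
          Finset.sum_const, Finset.card_univ, nsmul_eq_mul]
      have h3 : ∑ j, ηy j = (∑ j, ηx j) - n * cmin := by
        simp only [hηy]
        rw [Finset.sum_sub_distrib, Finset.sum_const, Finset.card_univ, nsmul_eq_mul]
      simp only [hF]
      rw [h2, h3]; ring
    by_cases hbig : ∀ j, ηy j ≤ K
    · have hmem : ηy ∈ box := by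
        intro j _; exact ⟨hηy0 j, hbig j⟩
      calc F η0 ≤ F ηy := isMinOn_iff.1 hη0min _ hmem
      _ = F ηx := hFeq
    · push_neg at hbig
      obtain ⟨j1, hj1⟩ := hbig
      obtain ⟨j0, _, hj0⟩ := Finset.exists_mem_eq_inf' hne ηx
      have hηyj0 : ηy j0 = 0 := by
        simp only [hηy, hc]
        rw [← hj0]
        ring
      have hA : ∑ i, w i j0 ≤ ∑ i, Finset.univ.sup' hne (fun j => w i j - ηy j) := by
        apply Finset.sum_le_sum
        intro i _
        have := Finset.le_sup' (f := fun j => w i j - ηy j) (Finset.mem_univ j0)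
        rw [hηyj0] at this
        simpa only [sub_zero] using this
      have hB : (n : ℝ) * m ≤ ∑ i, w i j0 := by
        calc (n : ℝ) * m = ∑ _i : T, m := by
              rw [Finset.sum_const, Finset.card_univ, nsmul_eq_mul]
        _ ≤ ∑ i, w i j0 := Finset.sum_le_sum (fun i _ => hmle i j0)
      have hC : ηy j1 ≤ ∑ j, ηy j :=
        Finset.single_le_sum (fun j _ => hηy0 j) (Finset.mem_univ j1)
      have hmin0 : F η0 ≤ F 0 := isMinOn_iff.1 hη0min _ h0box
      have hFηy : F ηy = (∑ i, Finset.univ.sup' hne (fun j => w i j - ηy j)) + ∑ j, ηy j := rfl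
      linarith
  set τ : T → ℝ := fun i => Finset.univ.sup' hne (fun j => w i j - η0 j) with hτ
  have hfeas : ∀ i j, w i j ≤ τ i + η0 j := by
    intro i j
    have := Finset.le_sup' (f := fun j => w i j - η0 j) (Finset.mem_univ j)
    simp only [hτ]; linarith [this]
  set t : T → Finset T := fun i => Finset.univ.filter (fun j => w i j - η0 j = τ i) with ht
  have hHall : ∀ A : Finset T, A.card ≤ (A.biUnion t).card := by
    intro A
    by_contra hcon
    push_neg at hcon
    set N : Finset T := A.biUnion t with hN
    set Q : Finset (T × T) :=
      (A ×ˢ Finset.univ).filter (fun q => w q.1 q.2 - η0 q.2 < τ q.1) with hQ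
    have hεex : ∃ ε : ℝ, 0 < ε ∧ ∀ q ∈ Q, ε ≤ τ q.1 - (w q.1 q.2 - η0 q.2) := by
      by_cases hQne : Q.Nonempty
      · refine ⟨min 1 (Q.inf' hQne (fun q => τ q.1 - (w q.1 q.2 - η0 q.2))), ?_, ?_⟩
        · apply lt_min one_pos
          rw [Finset.lt_inf'_iff]
          intro q hq
          have := (Finset.mem_filter.1 hq).2
          linarith
        · intro q hq
          exact le_trans (min_le_right _ _) (Finset.inf'_le _ hq)
      · exact ⟨1, one_pos, fun q hq => absurd ⟨q, hq⟩ hQne⟩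
    obtain ⟨ε, hε0, hεle⟩ := hεex
    set η1 : T → ℝ := fun j => η0 j + (if j ∈ N then ε else 0) with hη1
    have hη1ge : ∀ j, η0 j ≤ η1 j := by
      intro j
      simp only [hη1]
      by_cases hjN : j ∈ N
      · rw [if_pos hjN]; linarith
      · rw [if_neg hjN]; linarith
    have hkey : ∀ i ∈ A, Finset.univ.sup' hne (fun j => w i j - η1 j) ≤ τ i - ε := by
      intro i hiA
      apply Finset.sup'_le
      intro j _
      by_cases hj : w i j - η0 j = τ i
      · have hjN : j ∈ N :=
          Finset.mem_biUnion.2 ⟨i, hiA, Finset.mem_filter.2 ⟨Finset.mem_univ j, hj⟩⟩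
        simp only [hη1, if_pos hjN]
        linarith
      · have hqQ : (i, j) ∈ Q := by
          refine Finset.mem_filter.2 ⟨Finset.mem_product.2 ⟨hiA, Finset.mem_univ j⟩, ?_⟩
          exact lt_of_le_of_ne (by have := hfeas i j; simp only; linarith) hj
        have h1 := hεle (i, j) hqQ
        have h2 := hη1ge j
        simp only at h1
        linarith
    have hkey2 : ∀ i, Finset.univ.sup' hne (fun j => w i j - η1 j) ≤ τ i := by
      intro i
      apply Finset.sup'_le
      intro j _
      have h1 := hfeas i j
      have h2 := hη1ge j
      linarith
    have hs1 : ∑ i, Finset.univ.sup' hne (fun j => w i j - η1 j)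
        ≤ (∑ i, τ i) - ε * A.card := by
      have hpt : ∀ i ∈ (Finset.univ : Finset T),
          Finset.univ.sup' hne (fun j => w i j - η1 j) ≤ τ i - (if i ∈ A then ε else 0) := by
        intro i _
        by_cases hiA : i ∈ A
        · rw [if_pos hiA]; exact hkey i hiA
        · rw [if_neg hiA]
          simpa using hkey2 i
      calc ∑ i, Finset.univ.sup' hne (fun j => w i j - η1 j)
          ≤ ∑ i, (τ i - (if i ∈ A then ε else 0)) := Finset.sum_le_sum hpt
      _ = (∑ i, τ i) - ∑ i, (if i ∈ A then ε else 0) := Finset.sum_sub_distrib ..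
      _ = (∑ i, τ i) - ε * A.card := by
          rw [Finset.sum_ite_mem, Finset.univ_inter, Finset.sum_const, nsmul_eq_mul]
          ring
    have hs2 : ∑ j, η1 j = (∑ j, η0 j) + ε * N.card := by
      simp only [hη1]
      rw [Finset.sum_add_distrib, Finset.sum_ite_mem, Finset.univ_inter,
        Finset.sum_const, nsmul_eq_mul]
      ring
    have hFη0 : F η0 = (∑ i, τ i) + ∑ j, η0 j := rfl
    have hFη1 : F η1 = (∑ i, Finset.univ.sup' hne (fun j => w i j - η1 j)) + ∑ j, η1 j := rfl
    have hge := hglobal η1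
    have hcard : (N.card : ℝ) + 1 ≤ (A.card : ℝ) := by exact_mod_cast hcon
    nlinarith [mul_le_mul_of_nonneg_left hcard (le_of_lt hε0)]
  obtain ⟨f, hfinj, hft⟩ := (Finset.all_card_le_biUnion_card_iff_exists_injective t).1 hHall
  have hfbij : Function.Bijective f := Finite.injective_iff_bijective.1 hfinj
  refine ⟨τ, η0, Equiv.ofBijective f hfbij, hfeas, ?_⟩
  have htight : ∀ i, w i (f i) - η0 (f i) = τ i := by
    intro i
    have := hft i
    simp only [ht, Finset.mem_filter] at this
    exact this.2
  have h1 : ∑ i, w i (Equiv.ofBijective f hfbij i) = ∑ i, (τ i + η0 (f i)) := by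
    refine Finset.sum_congr rfl (fun i _ => ?_)
    have := htight i
    simp only [Equiv.ofBijective_apply]
    linarith
  rw [h1, Finset.sum_add_distrib]
  congr 1
  exact (Equiv.sum_comp (Equiv.ofBijective f hfbij) η0).symm

open Classical in
/-- Key combinatorial lemma: a feasible dual pair whose total value is at most the
value of some partial matching (with reserve values `d`, `e`). -/
lemma exists_feasible_le_matching {B S : Type*} [Fintype B] [Fintype S]
    (d : B → ℝ) (e : S → ℝ) (w : B → S → ℝ) :
    ∃ (τ : B → ℝ) (η : S → ℝ) (M : B → Option S),
      (∀ i i' j, M i = some j → M i' = some j → i = i') ∧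
      (∀ i, d i ≤ τ i) ∧ (∀ j, e j ≤ η j) ∧ (∀ i j, w i j ≤ τ i + η j) ∧
      (∑ i, τ i) + (∑ j, η j)
        ≤ (∑ i, (M i).elim (d i) (fun j => w i j))
          + ∑ j ∈ Finset.univ.filter (fun j => ¬ ∃ i, M i = some j), e j := by
  classical
  rcases isEmpty_or_nonempty B with hB | hB
  · refine ⟨fun _ => 0, e, fun _ => none, ?_, ?_, ?_, ?_, ?_⟩
    · intro i; exact isEmptyElim i
    · intro i; exact isEmptyElim i
    · intro j; exact le_refl _
    · intro i; exact isEmptyElim i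
    · have h1 : (∑ i : B, (0 : ℝ)) = 0 := by simp
      have h2 : (∑ i : B, ((none : Option S).elim (d i) (fun j => w i j))) = 0 := by simp
      have h3 : Finset.univ.filter
            (fun j : S => ¬ ∃ i : B, (fun _ : B => (none : Option S)) i = some j)
          = Finset.univ := by
        apply Finset.filter_true_of_mem
        intro j _
        rintro ⟨i, -⟩
        exact isEmptyElim i
      rw [h1, h2, h3]
  rcases isEmpty_or_nonempty S with hS | hS
  · refine ⟨d, fun _ => 0, fun _ => none, ?_, ?_, ?_, ?_, ?_⟩
    · intro i i' j; exact isEmptyElim j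
    · intro i; exact le_refl _
    · intro j; exact isEmptyElim j
    · intro i j; exact isEmptyElim j
    · simp
  -- main case
  set W : (B ⊕ S) → (B ⊕ S) → ℝ := fun x y =>
    match x, y with
    | .inl i, .inr j => w i j
    | .inl i, .inl _ => d i
    | .inr _, .inr j' => e j'
    | .inr _, .inl _ => 0
    with hW
  have hWll : ∀ (i i' : B), W (Sum.inl i) (Sum.inl i') = d i := fun _ _ => rfl
  have hWlr : ∀ (i : B) (j : S), W (Sum.inl i) (Sum.inr j) = w i j := fun _ _ => rfl
  have hWrr : ∀ (j : S) (j' : S), W (Sum.inr j) (Sum.inr j') = e j' := fun _ _ => rfl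
  have hWrl : ∀ (j : S) (i : B), W (Sum.inr j) (Sum.inl i) = 0 := fun _ _ => rfl
  obtain ⟨τs, ηs, σ, hfeas, hval⟩ := egervary_square W
  have hneB : (Finset.univ : Finset B).Nonempty := Finset.univ_nonempty
  have hneS : (Finset.univ : Finset S).Nonempty := Finset.univ_nonempty
  set α : ℝ := Finset.univ.inf' hneB (fun i : B => ηs (.inl i)) with hα
  set β : ℝ := Finset.univ.inf' hneS (fun j : S => τs (.inr j)) with hβ
  obtain ⟨i0, -, hi0⟩ := Finset.exists_mem_eq_inf' hneB (fun i : B => ηs (.inl i))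
  obtain ⟨j0, -, hj0⟩ := Finset.exists_mem_eq_inf' hneS (fun j : S => τs (.inr j))
  have hαi0 : α = ηs (Sum.inl i0) := hα.trans hi0
  have hβj0 : β = τs (Sum.inr j0) := hβ.trans hj0
  set M : B → Option S := fun i => Sum.elim (fun _ => (none : Option S)) some (σ (Sum.inl i))
    with hM
  have hMeq : ∀ i j, M i = some j → σ (Sum.inl i) = Sum.inr j := by
    intro i j h1
    cases hsi : σ (Sum.inl i) with
    | inl b =>
      exfalso
      simp only [hM] at h1
      rw [hsi] at h1
      simp only [Sum.elim_inl] at h1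
      cases h1
    | inr j'' =>
      simp only [hM] at h1
      rw [hsi] at h1
      simp only [Sum.elim_inr, Option.some.injEq] at h1
      rw [h1]
  have hMinj : ∀ i i' j, M i = some j → M i' = some j → i = i' := by
    intro i i' j h1 h2
    exact Sum.inl_injective (σ.injective ((hMeq i j h1).trans (hMeq i' j h2).symm))
  refine ⟨fun i => τs (.inl i) + α, fun j => ηs (.inr j) + β, M, hMinj, ?_, ?_, ?_, ?_⟩
  · intro i
    show d i ≤ τs (Sum.inl i) + α
    have h1 := hfeas (.inl i) (.inl i0)
    rw [hWll i i0] at h1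
    rw [hαi0]
    linarith
  · intro j
    show e j ≤ ηs (Sum.inr j) + β
    have h1 := hfeas (.inr j0) (.inr j)
    rw [hWrr j0 j] at h1
    rw [hβj0]
    linarith
  · intro i j
    show w i j ≤ (τs (Sum.inl i) + α) + (ηs (Sum.inr j) + β)
    have h1 := hfeas (.inl i) (.inr j)
    have h2 := hfeas (.inr j0) (.inl i0)
    rw [hWlr i j] at h1
    rw [hWrl j0 i0] at h2
    rw [hαi0, hβj0]
    linarith
  · -- value inequality
    have hsum1 : (∑ i : B, (τs (.inl i) + α)) + (∑ j : S, (ηs (.inr j) + β))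
        ≤ (∑ x : B ⊕ S, τs x) + (∑ x : B ⊕ S, ηs x) := by
      rw [Fintype.sum_sum_type τs, Fintype.sum_sum_type ηs,
        Finset.sum_add_distrib, Finset.sum_add_distrib,
        Finset.sum_const, Finset.sum_const]
      have hα' : (Finset.univ : Finset B).card • α ≤ ∑ i : B, ηs (.inl i) := by
        rw [← Finset.sum_const]
        apply Finset.sum_le_sum
        intro i _
        rw [hα]
        exact Finset.inf'_le _ (Finset.mem_univ i)
      have hβ' : (Finset.univ : Finset S).card • β ≤ ∑ j : S, τs (.inr j) := by
        rw [← Finset.sum_const]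
        apply Finset.sum_le_sum
        intro j _
        rw [hβ]
        exact Finset.inf'_le _ (Finset.mem_univ j)
      linarith
    rw [hval] at hsum1
    have hsplit : ∑ x : B ⊕ S, W x (σ x)
        = (∑ i : B, W (.inl i) (σ (.inl i))) + (∑ j : S, W (.inr j) (σ (.inr j))) :=
      Fintype.sum_sum_type _
    have hc1 : ∀ i : B, W (.inl i) (σ (.inl i)) = (M i).elim (d i) (fun j => w i j) := by
      intro i
      cases hsi : σ (Sum.inl i) with
      | inl b =>
        have hMi : M i = none := by
          simp only [hM]
          rw [hsi]
          rfl
        rw [hMi, hWll i b]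
        rfl
      | inr j =>
        have hMi : M i = some j := by
          simp only [hM]
          rw [hsi]
          rfl
        rw [hMi, hWlr i j]
        rfl
    set g : B ⊕ S → ℝ := Sum.elim (fun _ => (0 : ℝ)) e with hg
    have hc2 : ∀ j : S, W (.inr j) (σ (.inr j)) = g (σ (.inr j)) := by
      intro j
      cases hsj : σ (Sum.inr j) with
      | inl b => rw [hWrl j b]; simp [hg]
      | inr j' => rw [hWrr j j']; simp [hg]
    have hgtot : (∑ i : B, g (σ (.inl i))) + (∑ j : S, g (σ (.inr j))) = ∑ j : S, e j := by
      have h1 : ∑ x : B ⊕ S, g (σ x) = ∑ x : B ⊕ S, g x := Equiv.sum_comp σ g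
      have h2 : ∑ x : B ⊕ S, g (σ x)
          = (∑ i : B, g (σ (.inl i))) + (∑ j : S, g (σ (.inr j))) := Fintype.sum_sum_type _
      have h3 : ∑ x : B ⊕ S, g x = (∑ i : B, g (.inl i)) + (∑ j : S, g (.inr j)) :=
        Fintype.sum_sum_type _
      simp only [hg, Sum.elim_inl, Sum.elim_inr] at h3
      rw [← h2, h1, h3]
      simp
    have hgM : ∀ i : B, g (σ (.inl i)) = (M i).elim 0 e := by
      intro i
      cases hsi : σ (Sum.inl i) with
      | inl b =>
        have hMi : M i = none := by
          simp only [hM]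
          rw [hsi]
          rfl
        rw [hMi]
        simp [hg]
      | inr j =>
        have hMi : M i = some j := by
          simp only [hM]
          rw [hsi]
          rfl
        rw [hMi]
        simp [hg]
    have hmatched : ∑ i : B, (M i).elim 0 e
        = ∑ j ∈ Finset.univ.filter (fun j => ∃ i, M i = some j), e j :=
      sum_elim_matched M hMinj e
    have hsplitS : (∑ j ∈ Finset.univ.filter (fun j => ∃ i, M i = some j), e j)
        + (∑ j ∈ Finset.univ.filter (fun j => ¬ ∃ i, M i = some j), e j) = ∑ j : S, e j :=
      Finset.sum_filter_add_sum_filter_not Finset.univ _ e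
    have hc2' : ∑ j : S, W (.inr j) (σ (.inr j))
        = ∑ j ∈ Finset.univ.filter (fun j => ¬ ∃ i, M i = some j), e j := by
      rw [Finset.sum_congr rfl (fun j _ => hc2 j)]
      have hx := hgtot
      rw [Finset.sum_congr rfl (fun i _ => hgM i), hmatched] at hx
      linarith
    calc (∑ i : B, (τs (.inl i) + α)) + (∑ j : S, (ηs (.inr j) + β))
        ≤ ∑ x : B ⊕ S, W x (σ x) := hsum1
    _ = (∑ i : B, W (.inl i) (σ (.inl i))) + (∑ j : S, W (.inr j) (σ (.inr j))) := hsplit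
    _ = (∑ i : B, (M i).elim (d i) (fun j => w i j))
          + ∑ j ∈ Finset.univ.filter (fun j => ¬ ∃ i, M i = some j), e j := by
        rw [Finset.sum_congr rfl (fun i _ => hc1 i), hc2']

/-- The minimum stabilizing subsidy equals the subset instability. -/
theorem minSubsidy_eq_SI
    {B S : Type*} [Fintype B] [Fintype S]
    (h : B → S → ℝ) (c : S → ℝ)
    (hh : ∀ i j, 0 ≤ h i j) (hc : ∀ j, 0 ≤ c j)
    (ha : ∀ i j, 0 ≤ gain h c i j)
    (μ : Matching B S) (p : S → ℝ) (hp : ValidPrices c μ p) :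
    minSubsidy h c μ p = SI h c μ p := by
  classical
  obtain ⟨τ, η, M, Minj, hτd, hηe, hw, hval⟩ :=
    exists_feasible_le_matching (fun i => max 0 (-(buyerU h μ p i)))
      (fun j => max 0 (-(sellerU c p j)))
      (fun i j => gain h c i j - buyerU h μ p i - sellerU c p j)
  have hτd' : ∀ i, max 0 (-(buyerU h μ p i)) ≤ τ i := hτd
  have hηe' : ∀ j, max 0 (-(sellerU c p j)) ≤ η j := hηe
  have hw' : ∀ i j, gain h c i j - buyerU h μ p i - sellerU c p j ≤ τ i + η j := hw
  have hval' : (∑ i, τ i) + (∑ j, η j)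
      ≤ (∑ i, (M i).elim (max 0 (-(buyerU h μ p i)))
          (fun j => gain h c i j - buyerU h μ p i - sellerU c p j))
        + ∑ j ∈ Finset.univ.filter (fun j => ¬ ∃ i, M i = some j),
            max 0 (-(sellerU c p j)) := hval
  -- basic feasibility facts
  have hτ0 : ∀ i, 0 ≤ τ i := fun i => le_trans (le_max_left _ _) (hτd' i)
  have hη0 : ∀ j, 0 ≤ η j := fun j => le_trans (le_max_left _ _) (hηe' j)
  have huτ : ∀ i, 0 ≤ buyerU h μ p i + τ i := by
    intro i
    have h1 := hτd' i
    have h2 : -(buyerU h μ p i) ≤ max 0 (-(buyerU h μ p i)) := le_max_right _ _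
    linarith
  have hvη : ∀ j, 0 ≤ sellerU c p j + η j := by
    intro j
    have h1 := hηe' j
    have h2 : -(sellerU c p j) ≤ max 0 (-(sellerU c p j)) := le_max_right _ _
    linarith
  have hst : ∀ i j, gain h c i j ≤ buyerU h μ p i + τ i + (sellerU c p j + η j) := by
    intro i j
    have := hw' i j
    linarith
  -- domination: every subset-instability value is at most any feasible subsidy total
  have hdom : ∀ (τ' : B → ℝ) (η' : S → ℝ),
      (∀ i, 0 ≤ τ' i) → (∀ j, 0 ≤ η' j) →
      (∀ i, 0 ≤ buyerU h μ p i + τ' i) → (∀ j, 0 ≤ sellerU c p j + η' j) →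
      (∀ i j, gain h c i j ≤ buyerU h μ p i + τ' i + (sellerU c p j + η' j)) →
      ∀ (B' : Finset B) (S' : Finset S) (μ' : Matching B S), Within B' S' μ' →
      SW h c μ' - ((∑ i ∈ B', buyerU h μ p i) + (∑ j ∈ S', sellerU c p j))
        ≤ (∑ i, τ' i) + (∑ j, η' j) := by
    intro τ' η' hτ'0 hη'0 huτ' hvη' hst' B' S' μ' hWit
    have step : SW h c μ' ≤ (∑ i, (μ'.toFun i).elim 0 (fun _ => buyerU h μ p i + τ' i))
        + (∑ i, (μ'.toFun i).elim 0 (fun j => sellerU c p j + η' j)) := by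
      have eSW : SW h c μ' = ∑ i, (μ'.toFun i).elim 0 (fun j => gain h c i j) := rfl
      rw [eSW, ← Finset.sum_add_distrib]
      apply Finset.sum_le_sum
      intro i _
      cases hMi : μ'.toFun i with
      | none => simp
      | some j => simpa using hst' i j
    have s1 : (∑ i, (μ'.toFun i).elim 0 (fun _ => buyerU h μ p i + τ' i))
        ≤ ∑ i ∈ B', (buyerU h μ p i + τ' i) := by
      have hpt : ∀ i ∈ (Finset.univ : Finset B),
          (μ'.toFun i).elim 0 (fun _ => buyerU h μ p i + τ' i)
          ≤ (if i ∈ B' then buyerU h μ p i + τ' i else 0) := by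
        intro i _
        cases hMi : μ'.toFun i with
        | none =>
          simp only [Option.elim]
          by_cases hiB : i ∈ B'
          · rw [if_pos hiB]; exact huτ' i
          · rw [if_neg hiB]
        | some j =>
          rw [if_pos (hWit i j hMi).1]
          simp
      calc (∑ i, (μ'.toFun i).elim 0 (fun _ => buyerU h μ p i + τ' i))
          ≤ ∑ i, (if i ∈ B' then buyerU h μ p i + τ' i else 0) := Finset.sum_le_sum hpt
      _ = ∑ i ∈ B', (buyerU h μ p i + τ' i) := by
          rw [Finset.sum_ite_mem, Finset.univ_inter]
    have s2 : (∑ i, (μ'.toFun i).elim 0 (fun j => sellerU c p j + η' j))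
        ≤ ∑ j ∈ S', (sellerU c p j + η' j) := by
      rw [sum_elim_matched μ'.toFun μ'.inj]
      apply Finset.sum_le_sum_of_subset_of_nonneg
      · intro j hj
        rw [Finset.mem_filter] at hj
        obtain ⟨i, hi⟩ := hj.2
        exact (hWit i j hi).2
      · intro j _ _
        exact hvη' j
    have s3 : ∑ i ∈ B', τ' i ≤ ∑ i, τ' i :=
      Finset.sum_le_sum_of_subset_of_nonneg (Finset.subset_univ B') (fun i _ _ => hτ'0 i)
    have s4 : ∑ j ∈ S', η' j ≤ ∑ j, η' j :=
      Finset.sum_le_sum_of_subset_of_nonneg (Finset.subset_univ S') (fun j _ _ => hη'0 j)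
    have s5 : ∑ i ∈ B', (buyerU h μ p i + τ' i)
        = (∑ i ∈ B', buyerU h μ p i) + ∑ i ∈ B', τ' i := Finset.sum_add_distrib
    have s6 : ∑ j ∈ S', (sellerU c p j + η' j)
        = (∑ j ∈ S', sellerU c p j) + ∑ j ∈ S', η' j := Finset.sum_add_distrib
    linarith
  -- the witness matching and coalition
  set M' : Matching B S := ⟨M, Minj⟩ with hM'
  set B' : Finset B := Finset.univ.filter (fun i => (M i).isSome ∨ buyerU h μ p i < 0) with hB'
  set S' : Finset S := Finset.univ.filter
    (fun j => (∃ i, M i = some j) ∨ sellerU c p j < 0) with hS'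
  have hWit : Within B' S' M' := by
    intro i j hij
    have hij' : M i = some j := hij
    constructor
    · rw [hB', Finset.mem_filter]
      exact ⟨Finset.mem_univ i, Or.inl (by rw [hij']; rfl)⟩
    · rw [hS', Finset.mem_filter]
      exact ⟨Finset.mem_univ j, Or.inl ⟨i, hij'⟩⟩
  have hswap : ∀ i, (M i).elim (max 0 (-(buyerU h μ p i)))
        (fun j => gain h c i j - buyerU h μ p i - sellerU c p j)
      = (M i).elim 0 (fun j => gain h c i j) - (if i ∈ B' then buyerU h μ p i else 0)
        + (M i).elim 0 (fun j => -(sellerU c p j)) := by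
    intro i
    cases hMi : M i with
    | some j =>
      have hiB' : i ∈ B' := by
        rw [hB', Finset.mem_filter]
        exact ⟨Finset.mem_univ i, Or.inl (by rw [hMi]; rfl)⟩
      rw [if_pos hiB']
      simp only [Option.elim]
      ring
    | none =>
      simp only [Option.elim]
      by_cases hui : buyerU h μ p i < 0
      · have hiB' : i ∈ B' := by
          rw [hB', Finset.mem_filter]
          exact ⟨Finset.mem_univ i, Or.inr hui⟩
        rw [if_pos hiB', max_eq_right (by linarith : (0:ℝ) ≤ -(buyerU h μ p i))]
        ring
      · have hiB' : i ∉ B' := by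
          rw [hB', Finset.mem_filter]
          rintro ⟨-, hor | hor⟩
          · rw [hMi] at hor; simp at hor
          · exact hui hor
        rw [if_neg hiB', max_eq_left (by linarith : -(buyerU h μ p i) ≤ 0)]
        ring
  have hA1 : (∑ i, (M i).elim (max 0 (-(buyerU h μ p i)))
        (fun j => gain h c i j - buyerU h μ p i - sellerU c p j))
      = SW h c M' - (∑ i ∈ B', buyerU h μ p i)
        - ∑ j ∈ Finset.univ.filter (fun j => ∃ i, M i = some j), sellerU c p j := by
    rw [Finset.sum_congr rfl (fun i _ => hswap i), Finset.sum_add_distrib,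
      Finset.sum_sub_distrib]
    have e1 : ∑ i, (if i ∈ B' then buyerU h μ p i else 0) = ∑ i ∈ B', buyerU h μ p i := by
      rw [Finset.sum_ite_mem, Finset.univ_inter]
    have e2 : ∑ i, (M i).elim 0 (fun j => -(sellerU c p j))
        = -∑ j ∈ Finset.univ.filter (fun j => ∃ i, M i = some j), sellerU c p j := by
      rw [sum_elim_matched M Minj (fun j => -(sellerU c p j))]
      exact Finset.sum_neg_distrib ..
    have e3 : SW h c M' = ∑ i, (M i).elim 0 (fun j => gain h c i j) := rfl
    rw [e1, e2, e3]
    ring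
  have hA2 : ∑ j ∈ S', sellerU c p j
      = (∑ j ∈ Finset.univ.filter (fun j => ∃ i, M i = some j), sellerU c p j)
        - ∑ j ∈ Finset.univ.filter (fun j => ¬ ∃ i, M i = some j),
            max 0 (-(sellerU c p j)) := by
    rw [hS', Finset.sum_filter, Finset.sum_filter, Finset.sum_filter, ← Finset.sum_sub_distrib]
    refine Finset.sum_congr rfl (fun j _ => ?_)
    by_cases hj : ∃ i, M i = some j
    · rw [if_pos (Or.inl hj), if_pos hj, if_neg (not_not_intro hj)]
      ring
    · rw [if_neg hj, if_pos hj]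
      by_cases hvj : sellerU c p j < 0
      · rw [if_pos (Or.inr hvj),
          max_eq_right (by linarith : (0:ℝ) ≤ -(sellerU c p j))]
        ring
      · rw [if_neg (by rintro (hcc | hcc); exacts [hj hcc, hvj hcc]),
          max_eq_left (by linarith : -(sellerU c p j) ≤ 0)]
        ring
  have hx0leSI : (∑ i, τ i) + (∑ j, η j)
      ≤ SW h c M' - ((∑ i ∈ B', buyerU h μ p i) + (∑ j ∈ S', sellerU c p j)) := by
    linarith [hval', hA1, hA2]
  -- endgame
  have hA : minSubsidy h c μ p ≤ (∑ i, τ i) + (∑ j, η j) := by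
    unfold minSubsidy
    apply csInf_le
    · refine ⟨0, ?_⟩
      rintro x ⟨τ'', η'', hτ''0, hη''0, -, -, -, rfl⟩
      have k1 : (0:ℝ) ≤ ∑ i, τ'' i := Finset.sum_nonneg (fun i _ => hτ''0 i)
      have k2 : (0:ℝ) ≤ ∑ j, η'' j := Finset.sum_nonneg (fun j _ => hη''0 j)
      linarith
    · exact ⟨τ, η, hτ0, hη0, huτ, hvη, hst, rfl⟩
  have hB1 : SW h c M' - ((∑ i ∈ B', buyerU h μ p i) + (∑ j ∈ S', sellerU c p j))
      ≤ SI h c μ p := by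
    unfold SI SIgen
    apply le_csSup
    · refine ⟨(∑ i, τ i) + (∑ j, η j), ?_⟩
      rintro y ⟨B'', S'', μ'', hW'', rfl⟩
      exact hdom τ η hτ0 hη0 huτ hvη hst B'' S'' μ'' hW''
    · exact ⟨B', S', M', hWit, rfl⟩
  have h2 : SI h c μ p ≤ minSubsidy h c μ p := by
    unfold SI SIgen minSubsidy
    apply le_csInf
    · exact ⟨(∑ i, τ i) + (∑ j, η j), τ, η, hτ0, hη0, huτ, hvη, hst, rfl⟩
    · rintro x ⟨τ'', η'', hτ''0, hη''0, huτ'', hvη'', hst'', rfl⟩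
      apply csSup_le
      · refine ⟨_, ∅, ∅, ⟨fun _ => none, fun i i' j hij _ => by simp at hij⟩,
          fun i j hij => absurd hij (by simp), rfl⟩
      · rintro y ⟨B'', S'', μ'', hW'', rfl⟩
        exact hdom τ'' η'' hτ''0 hη''0 huτ'' hvη'' hst'' B'' S'' μ'' hW''
  exact le_antisymm (hA.trans (hx0leSI.trans hB1)) h2
end AuxLemmas
end

section
/- For any matching μ of an assignment game, there exists a nonnegative price vector p : S → ℝ such that the allocation (μ, p) is individually rational and SI(μ, p) = OPT − SW(μ); equivalently, when OPT > 0, the stability index attains the optimality ratio: J(μ,p) = λ(μ). -/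
open Finset

variable {B S : Type*} [Fintype B] [Fintype S]

lemma range_SW_finite (h : B → S → ℝ) (c : S → ℝ) :
    (Set.range (SW h c)).Finite := by
  have : Set.range (SW h c) ⊆ Set.range
      (fun f : B → Option S => ∑ i : B, ((f i).elim 0 (fun j => gain h c i j))) := by
    rintro x ⟨μ, rfl⟩
    exact ⟨μ.toFun, rfl⟩
  exact (Set.finite_range _).subset this

lemma SW_le_OPT (h : B → S → ℝ) (c : S → ℝ) (μ : Matching B S) :
    SW h c μ ≤ OPT h c :=
  le_csSup (range_SW_finite h c).bddAbove (Set.mem_range_self μ)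

lemma exists_OPT (h : B → S → ℝ) (c : S → ℝ) :
    ∃ ν : Matching B S, SW h c ν = OPT h c := by
  have hne : (Set.range (SW h c)).Nonempty :=
    ⟨SW h c ⟨fun _ => none, fun i i' j hi _ => by simp at hi⟩, Set.mem_range_self _⟩
  have := hne.csSup_mem (range_SW_finite h c)
  exact this
/-- Existence of a global minimizer of the dual objective. -/
lemma exists_min_dual (a : B → S → ℝ) (ha : ∀ i j, 0 ≤ a i j) :
    ∃ (u : B → ℝ) (v : S → ℝ), (∀ i, 0 ≤ u i) ∧ (∀ j, 0 ≤ v j) ∧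
      (∀ i j, a i j ≤ u i + v j) ∧
      (∀ (u' : B → ℝ) (v' : S → ℝ), (∀ i, 0 ≤ u' i) → (∀ j, 0 ≤ v' j) →
        (∀ i j, a i j ≤ u' i + v' j) →
        (∑ i, u i) + (∑ j, v j) ≤ (∑ i, u' i) + (∑ j, v' j)) := by
  classical
  set C : ℝ := ∑ i : B, ∑ j : S, a i j with hCdef
  have hC0 : 0 ≤ C := Finset.sum_nonneg fun i _ => Finset.sum_nonneg fun j _ => ha i j
  have hCa : ∀ i j, a i j ≤ C := by
    intro i j
    calc a i j ≤ ∑ j' : S, a i j' :=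
          Finset.single_le_sum (fun j' _ => ha i j') (mem_univ j)
      _ ≤ C := Finset.single_le_sum (fun i' _ => Finset.sum_nonneg fun j' _ => ha i' j')
          (mem_univ i)
  set K : Set ((B → ℝ) × (S → ℝ)) :=
    (Set.univ.pi fun _ => Set.Icc (0:ℝ) C) ×ˢ (Set.univ.pi fun _ => Set.Icc (0:ℝ) C) with hK
  set Feas2 : Set ((B → ℝ) × (S → ℝ)) := {p | ∀ i j, a i j ≤ p.1 i + p.2 j} with hF2
  have hKcomp : IsCompact K :=
    (isCompact_univ_pi fun _ => isCompact_Icc).prod (isCompact_univ_pi fun _ => isCompact_Icc)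
  have hF2closed : IsClosed Feas2 := by
    have : Feas2 = ⋂ (i : B), ⋂ (j : S), {p : (B → ℝ) × (S → ℝ) | a i j ≤ p.1 i + p.2 j} := by
      ext p; simp [hF2, Set.mem_iInter]
    rw [this]
    exact isClosed_iInter fun i => isClosed_iInter fun j =>
      isClosed_le continuous_const
        (((continuous_apply i).comp continuous_fst).add ((continuous_apply j).comp continuous_snd))
  have hXcomp : IsCompact (K ∩ Feas2) := hKcomp.inter_right hF2closed
  have hXne : (K ∩ Feas2).Nonempty := by
    refine ⟨((fun _ => C), (fun _ => 0)), ⟨⟨fun i _ => ?_, fun j _ => ?_⟩, fun i j => ?_⟩⟩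
    · exact ⟨le_refl 0 |>.trans hC0, le_refl C⟩
    · exact ⟨le_refl 0, hC0⟩
    · simpa using hCa i j
  have hFcont : ContinuousOn (fun p : (B → ℝ) × (S → ℝ) => (∑ i, p.1 i) + ∑ j, p.2 j)
      (K ∩ Feas2) := by
    apply Continuous.continuousOn
    exact ((continuous_finset_sum univ fun i _ => (continuous_apply i).comp continuous_fst).add
      (continuous_finset_sum univ fun j _ => (continuous_apply j).comp continuous_snd))
  obtain ⟨q, hqX, hqmin⟩ := hXcomp.exists_isMinOn hXne hFcont
  refine ⟨q.1, q.2, fun i => (hqX.1.1 i (Set.mem_univ i)).1, fun j => (hqX.1.2 j (Set.mem_univ j)).1,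
    fun i j => hqX.2 i j, ?_⟩
  intro u' v' hu' hv' hfeas'
  -- truncate (u', v') into the box
  set p : (B → ℝ) × (S → ℝ) := (fun i => min (u' i) C, fun j => min (v' j) C) with hp
  have hpX : p ∈ K ∩ Feas2 := by
    constructor
    · exact ⟨fun i _ => ⟨le_min (hu' i) hC0, min_le_right _ _⟩,
        fun j _ => ⟨le_min (hv' j) hC0, min_le_right _ _⟩⟩
    · intro i j
      rcases le_total (u' i) C with h1 | h1 <;> rcases le_total (v' j) C with h2 | h2
      · simpa [hp, min_eq_left h1, min_eq_left h2] using hfeas' i j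
      · calc a i j ≤ C := hCa i j
          _ ≤ min (u' i) C + C := by
              have : (0:ℝ) ≤ min (u' i) C := le_min (hu' i) hC0
              linarith
          _ = min (u' i) C + min (v' j) C := by rw [min_eq_right h2]
      · calc a i j ≤ C := hCa i j
          _ ≤ C + min (v' j) C := by
              have : (0:ℝ) ≤ min (v' j) C := le_min (hv' j) hC0
              linarith
          _ = min (u' i) C + min (v' j) C := by rw [min_eq_right h1]
      · calc a i j ≤ C := hCa i j
          _ ≤ C + C := by linarith
          _ = min (u' i) C + min (v' j) C := by rw [min_eq_right h1, min_eq_right h2]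
  have h1 := hqmin hpX
  have h2 : (∑ i, p.1 i) + ∑ j, p.2 j ≤ (∑ i, u' i) + ∑ j, v' j := by
    gcongr with i _ j _
    · exact min_le_left _ _
    · exact min_le_left _ _
  exact le_trans h1 h2

open scoped Classical in
/-- At a minimizing dual, the tight graph satisfies Hall's condition on buyers with
positive dual value. -/
lemma hall_of_min (a : B → S → ℝ) (u : B → ℝ) (v : S → ℝ)
    (hu : ∀ i, 0 ≤ u i) (hv : ∀ j, 0 ≤ v j) (hfeas : ∀ i j, a i j ≤ u i + v j)
    (hmin : ∀ (u' : B → ℝ) (v' : S → ℝ), (∀ i, 0 ≤ u' i) → (∀ j, 0 ≤ v' j) →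
      (∀ i j, a i j ≤ u' i + v' j) →
      (∑ i, u i) + (∑ j, v j) ≤ (∑ i, u' i) + (∑ j, v' j))
    (T : Finset B) (hT : ∀ i ∈ T, 0 < u i) :
    T.card ≤ (T.biUnion (fun i => univ.filter (fun j => u i + v j ≤ a i j))).card := by
  by_contra hlt
  push_neg at hlt
  set N : Finset S := T.biUnion (fun i => univ.filter (fun j => u i + v j ≤ a i j)) with hN
  have hTne : T.Nonempty := by
    rcases T.eq_empty_or_nonempty with rfl | hne
    · simp at hlt
    · exact hne
  have hε₁pos : 0 < T.inf' hTne u := by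
    rw [Finset.lt_inf'_iff]
    exact hT
  set Q : Finset (B × S) := (T ×ˢ (univ \ N)).filter (fun p => ¬ (u p.1 + v p.2 ≤ a p.1 p.2))
    with hQ
  set slack : B × S → ℝ := fun p => u p.1 + v p.2 - a p.1 p.2 with hslack
  set ε : ℝ := if hQn : Q.Nonempty then min (T.inf' hTne u) (Q.inf' hQn slack) else T.inf' hTne u
    with hε
  have hslackpos : ∀ p ∈ Q, 0 < slack p := by
    intro p hp
    rw [hQ, Finset.mem_filter] at hp
    have := hp.2
    simp only [hslack]
    push_neg at this
    linarith
  have hεpos : 0 < ε := by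
    rw [hε]
    split_ifs with hQn
    · exact lt_min hε₁pos (by rw [Finset.lt_inf'_iff]; exact hslackpos)
    · exact hε₁pos
  have hεu : ∀ i ∈ T, ε ≤ u i := by
    intro i hi
    have h1 : T.inf' hTne u ≤ u i := Finset.inf'_le _ hi
    rw [hε]; split_ifs with hQn
    · exact le_trans (min_le_left _ _) h1
    · exact h1
  have hεslack : ∀ i ∈ T, ∀ j, j ∉ N → ¬ (u i + v j ≤ a i j) → ε ≤ u i + v j - a i j := by
    intro i hi j hj hnt
    have hmem : (i, j) ∈ Q := by
      rw [hQ, Finset.mem_filter, Finset.mem_product]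
      exact ⟨⟨hi, Finset.mem_sdiff.2 ⟨mem_univ j, hj⟩⟩, hnt⟩
    have hQn : Q.Nonempty := ⟨_, hmem⟩
    have h1 : Q.inf' hQn slack ≤ slack (i, j) := Finset.inf'_le _ hmem
    rw [hε, dif_pos hQn]
    exact le_trans (min_le_right _ _) h1
  -- perturbed point
  set u' : B → ℝ := fun i => u i - (if i ∈ T then ε else 0) with hu'
  set v' : S → ℝ := fun j => v j + (if j ∈ N then ε else 0) with hv'
  have hu'0 : ∀ i, 0 ≤ u' i := by
    intro i
    simp only [hu']
    split_ifs with hi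
    · linarith [hεu i hi]
    · linarith [hu i]
  have hv'0 : ∀ j, 0 ≤ v' j := by
    intro j
    simp only [hv']
    split_ifs with hj
    · linarith [hv j, hεpos]
    · linarith [hv j]
  have hfeas' : ∀ i j, a i j ≤ u' i + v' j := by
    intro i j
    simp only [hu', hv']
    by_cases hi : i ∈ T
    · by_cases hj : j ∈ N
      · simp only [if_pos hi, if_pos hj]
        linarith [hfeas i j]
      · by_cases ht : u i + v j ≤ a i j
        · exact absurd (Finset.mem_biUnion.2 ⟨i, hi, Finset.mem_filter.2 ⟨mem_univ j, ht⟩⟩) hj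
        · have := hεslack i hi j hj ht
          simp only [if_pos hi, if_neg hj]
          linarith
    · simp only [if_neg hi]
      split_ifs with hj
      · linarith [hfeas i j, hεpos]
      · linarith [hfeas i j]
  have hsum := hmin u' v' hu'0 hv'0 hfeas'
  have hsu : ∑ i, u' i = (∑ i, u i) - ε * T.card := by
    simp only [hu']
    rw [Finset.sum_sub_distrib]
    congr 1
    rw [Finset.sum_ite_mem, Finset.univ_inter, Finset.sum_const, nsmul_eq_mul, mul_comm]
  have hsv : ∑ j, v' j = (∑ j, v j) + ε * N.card := by
    simp only [hv']
    rw [Finset.sum_add_distrib]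
    congr 1
    rw [Finset.sum_ite_mem, Finset.univ_inter, Finset.sum_const, nsmul_eq_mul, mul_comm]
  rw [hsu, hsv] at hsum
  have : ε * N.card < ε * T.card := by
    apply mul_lt_mul_of_pos_left _ hεpos
    exact_mod_cast hlt
  linarith

variable [DecidableEq B] [DecidableEq S]

/-- Augmenting step: given a tight partial matching `f` covering its domain and a
tight injective assignment `g` of positive sellers to buyers, we can enlarge the
set of positive sellers covered by `f` to include a given `j0`. -/
lemma aug (a : B → S → ℝ) (u : B → ℝ) (v : S → ℝ)
    (Sp : Finset S) (g : S → B)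
    (hgt : ∀ j ∈ Sp, u (g j) + v j ≤ a (g j) j)
    (hginj : ∀ j ∈ Sp, ∀ j' ∈ Sp, g j = g j' → j = j') :
    ∀ (n : ℕ) (V : Finset S) (f : B → Option S) (j0 : S),
      (Sp \ V).card ≤ n →
      (∀ i i' j, f i = some j → f i' = some j → i = i') →
      (∀ i j, f i = some j → u i + v j ≤ a i j) →
      j0 ∈ Sp → j0 ∉ V → V ⊆ Sp →
      (∀ i, f i ≠ some j0) →
      (∀ j, j ∈ V → ∀ i, f i = some j → i = g j) →
      ∃ f' : B → Option S,
        (∀ i i' j, f' i = some j → f' i' = some j → i = i') ∧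
        (∀ i j, f' i = some j → u i + v j ≤ a i j) ∧
        (∀ i, f i ≠ none → f' i ≠ none) ∧
        (∀ j, j ∈ Sp → (∃ i, f i = some j) → ∃ i, f' i = some j) ∧
        (∃ i, f' i = some j0) := by
  classical
  intro n
  induction n with
  | zero =>
    intro V f j0 hcard _ _ hj0Sp hj0V _ _ _
    exact absurd (Finset.card_pos.2 ⟨j0, Finset.mem_sdiff.2 ⟨hj0Sp, hj0V⟩⟩)
      (by omega)
  | succ n ih =>
    intro V f j0 hcard hinj htight hj0Sp hj0V hVSp hj0im hI
    set i0 : B := g j0 with hi0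
    set f1 : B → Option S := Function.update f i0 (some j0) with hf1
    have hf1i0 : f1 i0 = some j0 := by simp [hf1]
    have hf1other : ∀ i, i ≠ i0 → f1 i = f i := by
      intro i hi; simp [hf1, Function.update_of_ne hi]
    have hinj1 : ∀ i i' j, f1 i = some j → f1 i' = some j → i = i' := by
      intro i i' j hi hi'
      by_cases h1 : i = i0 <;> by_cases h2 : i' = i0
      · rw [h1, h2]
      · subst h1
        rw [hf1i0] at hi
        injection hi with hji
        subst hji
        rw [hf1other i' h2] at hi'
        exact absurd hi' (hj0im i')
      · subst h2
        rw [hf1i0] at hi'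
        rw [hf1other i h1] at hi
        injection hi' with hji
        subst hji
        exact absurd hi (hj0im i)
      · rw [hf1other i h1] at hi
        rw [hf1other i' h2] at hi'
        exact hinj i i' j hi hi'
    have htight1 : ∀ i j, f1 i = some j → u i + v j ≤ a i j := by
      intro i j hij
      by_cases h1 : i = i0
      · subst h1
        rw [hf1i0] at hij
        injection hij with hji
        subst hji
        exact hgt j0 hj0Sp
      · exact htight i j (by rwa [hf1other i h1] at hij)
    have hdom1 : ∀ i, f i ≠ none → f1 i ≠ none := by
      intro i hi
      by_cases h1 : i = i0
      · subst h1; rw [hf1i0]; simp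
      · rwa [hf1other i h1]
    cases hfi0 : f i0 with
    | none =>
      refine ⟨f1, hinj1, htight1, hdom1, ?_, ⟨i0, hf1i0⟩⟩
      rintro j hjSp ⟨i, hi⟩
      have h1 : i ≠ i0 := by
        intro h; rw [h, hfi0] at hi; exact absurd hi (by simp)
      exact ⟨i, by rw [hf1other i h1]; exact hi⟩
    | some j1 =>
      have hj1j0 : j1 ≠ j0 := by
        intro h; exact hj0im i0 (h ▸ hfi0)
      have hj1im1 : ∀ i, f1 i ≠ some j1 := by
        intro i hi
        by_cases h1 : i = i0
        · subst h1; rw [hf1i0] at hi; injection hi with h'; exact hj1j0 h'.symm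
        · rw [hf1other i h1] at hi
          have := hinj i i0 j1 hi hfi0
          exact h1 this
      by_cases hj1Sp : j1 ∈ Sp
      · -- continue the alternating path
        have hj1V : j1 ∉ V := by
          intro hmem
          have h1 : i0 = g j1 := hI j1 hmem i0 hfi0
          have h2 : g j0 = g j1 := by rw [← hi0]; exact h1
          exact hj1j0 (hginj j0 hj0Sp j1 (hVSp hmem) h2).symm
        have hj1V' : j1 ∉ insert j0 V := by
          simp only [Finset.mem_insert]
          rintro (h | h)
          · exact hj1j0 h
          · exact hj1V h
        have hcard' : (Sp \ insert j0 V).card ≤ n := by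
          have hsub : Sp \ insert j0 V ⊆ (Sp \ V).erase j0 := by
            intro j hj
            rw [Finset.mem_sdiff, Finset.mem_insert] at hj
            push_neg at hj
            exact Finset.mem_erase.2 ⟨hj.2.1, Finset.mem_sdiff.2 ⟨hj.1, hj.2.2⟩⟩
          have h1 := Finset.card_le_card hsub
          have h2 : ((Sp \ V).erase j0).card = (Sp \ V).card - 1 :=
            Finset.card_erase_of_mem (Finset.mem_sdiff.2 ⟨hj0Sp, hj0V⟩)
          have h3 : 0 < (Sp \ V).card :=
            Finset.card_pos.2 ⟨j0, Finset.mem_sdiff.2 ⟨hj0Sp, hj0V⟩⟩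
          omega
        have hI1 : ∀ j, j ∈ insert j0 V → ∀ i, f1 i = some j → i = g j := by
          intro j hj i hi
          rcases Finset.mem_insert.1 hj with rfl | hjV
          · by_cases h1 : i = i0
            · rw [h1]
            · rw [hf1other i h1] at hi
              exact absurd hi (hj0im i)
          · by_cases h1 : i = i0
            · subst h1
              rw [hf1i0] at hi
              injection hi with h'
              subst h'
              exact absurd hjV hj0V
            · rw [hf1other i h1] at hi
              exact hI j hjV i hi
        obtain ⟨f', hinj', htight', hdom', him', hj1'⟩ :=
          ih (insert j0 V) f1 j1 hcard' hinj1 htight1 hj1Sp hj1V'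
            (Finset.insert_subset hj0Sp hVSp) hj1im1 hI1
        refine ⟨f', hinj', htight', fun i hi => hdom' i (hdom1 i hi), ?_, ?_⟩
        · rintro j hjSp ⟨i, hi⟩
          by_cases hjj1 : j = j1
          · exact hjj1 ▸ hj1'
          · have h1 : i ≠ i0 := by
              intro h; rw [h, hfi0] at hi; injection hi with h'; exact hjj1 h'.symm
            exact him' j hjSp ⟨i, by rw [hf1other i h1]; exact hi⟩
        · exact him' j0 hj0Sp ⟨i0, hf1i0⟩
      · -- the path ends here: j1 leaves the image but j1 is not a positive seller
        refine ⟨f1, hinj1, htight1, hdom1, ?_, ⟨i0, hf1i0⟩⟩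
        rintro j hjSp ⟨i, hi⟩
        have h1 : i ≠ i0 := by
          intro h; rw [h, hfi0] at hi; injection hi with h'
          exact hj1Sp (h' ▸ hjSp)
        exact ⟨i, by rw [hf1other i h1]; exact hi⟩

open scoped Classical in
/-- Iterating augmentation: produce a tight matching covering all of `Sp` while
keeping the domain. -/
lemma build (a : B → S → ℝ) (u : B → ℝ) (v : S → ℝ)
    (Sp : Finset S) (g : S → B)
    (hgt : ∀ j ∈ Sp, u (g j) + v j ≤ a (g j) j)
    (hginj : ∀ j ∈ Sp, ∀ j' ∈ Sp, g j = g j' → j = j') :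
    ∀ (n : ℕ) (f : B → Option S),
      (Sp \ (univ.filter (fun j => ∃ i, f i = some j))).card ≤ n →
      (∀ i i' j, f i = some j → f i' = some j → i = i') →
      (∀ i j, f i = some j → u i + v j ≤ a i j) →
      ∃ f' : B → Option S,
        (∀ i i' j, f' i = some j → f' i' = some j → i = i') ∧
        (∀ i j, f' i = some j → u i + v j ≤ a i j) ∧
        (∀ i, f i ≠ none → f' i ≠ none) ∧
        (∀ j, j ∈ Sp → ∃ i, f' i = some j) := by
  intro n
  induction n with
  | zero =>
    intro f hcard hinj htight
    refine ⟨f, hinj, htight, fun i hi => hi, ?_⟩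
    intro j hjSp
    by_contra hno
    have : j ∈ Sp \ (univ.filter (fun j => ∃ i, f i = some j)) := by
      rw [Finset.mem_sdiff, Finset.mem_filter]
      refine ⟨hjSp, ?_⟩
      rintro ⟨-, i, hi⟩
      exact hno ⟨i, hi⟩
    exact absurd (Finset.card_pos.2 ⟨j, this⟩) (by omega)
  | succ n ih =>
    intro f hcard hinj htight
    by_cases hall : ∀ j, j ∈ Sp → ∃ i, f i = some j
    · exact ⟨f, hinj, htight, fun i hi => hi, hall⟩
    · push_neg at hall
      obtain ⟨j0, hj0Sp, hj0im⟩ := hall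
      have hj0im' : ∀ i, f i ≠ some j0 := hj0im
      obtain ⟨f'', hinj'', htight'', hdom'', him'', hj0''⟩ :=
        aug a u v Sp g hgt hginj (Sp \ ∅).card ∅ f j0 le_rfl hinj htight hj0Sp
          (Finset.notMem_empty j0) (Finset.empty_subset Sp) hj0im'
          (fun j hj => absurd hj (Finset.notMem_empty j))
      have hcard'' : (Sp \ (univ.filter (fun j => ∃ i, f'' i = some j))).card ≤ n := by
        have hsub : Sp \ (univ.filter (fun j => ∃ i, f'' i = some j)) ⊆
            (Sp \ (univ.filter (fun j => ∃ i, f i = some j))).erase j0 := by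
          intro j hj
          rw [Finset.mem_sdiff, Finset.mem_filter] at hj
          push_neg at hj
          refine Finset.mem_erase.2 ⟨?_, ?_⟩
          · rintro rfl
            obtain ⟨i, hi⟩ := hj0''
            exact hj.2 (mem_univ _) i hi
          · rw [Finset.mem_sdiff, Finset.mem_filter]
            refine ⟨hj.1, ?_⟩
            rintro ⟨-, i, hi⟩
            obtain ⟨i', hi'⟩ := him'' j hj.1 ⟨i, hi⟩
            exact (hj.2 (mem_univ j) i') hi'
        have h0 : j0 ∈ Sp \ (univ.filter (fun j => ∃ i, f i = some j)) := by
          rw [Finset.mem_sdiff, Finset.mem_filter]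
          refine ⟨hj0Sp, ?_⟩
          rintro ⟨-, i, hi⟩
          exact hj0im i hi
        have h1 := Finset.card_le_card hsub
        have h2 := Finset.card_erase_of_mem h0
        have h3 := Finset.card_pos.2 ⟨j0, h0⟩
        omega
      obtain ⟨f', hinj', htight', hdom', him'⟩ := ih f'' hcard'' hinj'' htight''
      exact ⟨f', hinj', htight', fun i hi => hdom' i (hdom'' i hi), him'⟩

omit [DecidableEq B] [DecidableEq S] in
/-- Existence of a feasible dual with value at most `OPT`. -/
lemma exists_dual (h : B → S → ℝ) (c : S → ℝ) (ha : ∀ i j, 0 ≤ gain h c i j) :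
    ∃ (u : B → ℝ) (v : S → ℝ), (∀ i, 0 ≤ u i) ∧ (∀ j, 0 ≤ v j) ∧
      (∀ i j, gain h c i j ≤ u i + v j) ∧ (∑ i, u i) + (∑ j, v j) ≤ OPT h c := by
  classical
  set a : B → S → ℝ := gain h c with hadef
  obtain ⟨u, v, hu, hv, hfeas, hmin⟩ := exists_min_dual a ha
  refine ⟨u, v, hu, hv, hfeas, ?_⟩
  set Bp : Finset B := univ.filter (fun i => 0 < u i) with hBp
  set Sp : Finset S := univ.filter (fun j => 0 < v j) with hSp
  have hallB : ∀ T : Finset B, T ⊆ Bp →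
      T.card ≤ (T.biUnion (fun i => univ.filter (fun j => u i + v j ≤ a i j))).card := by
    intro T hT
    exact hall_of_min a u v hu hv hfeas hmin T
      (fun i hi => (Finset.mem_filter.1 (hT hi)).2)
  have hallS : ∀ T : Finset S, T ⊆ Sp →
      T.card ≤ (T.biUnion (fun j => univ.filter (fun i => u i + v j ≤ a i j))).card := by
    intro T hT
    have hmin' : ∀ (v' : S → ℝ) (u' : B → ℝ), (∀ j, 0 ≤ v' j) → (∀ i, 0 ≤ u' i) →
        (∀ j i, a i j ≤ v' j + u' i) →
        (∑ j, v j) + (∑ i, u i) ≤ (∑ j, v' j) + (∑ i, u' i) := by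
      intro v' u' hv' hu' hfeas'
      have := hmin u' v' hu' hv' (fun i j => by have := hfeas' j i; linarith)
      linarith
    have hres := hall_of_min (fun j i => a i j) v u hv hu
      (fun j i => by have := hfeas i j; linarith) hmin' T
      (fun j hj => (Finset.mem_filter.1 (hT hj)).2)
    have heq : (T.biUnion (fun j => univ.filter (fun i => u i + v j ≤ a i j)))
        = (T.biUnion (fun j => univ.filter (fun i => v j + u i ≤ a i j))) := by
      ext i
      simp only [Finset.mem_biUnion, Finset.mem_filter, mem_univ, true_and]
      constructor <;> rintro ⟨j, hjT, hle⟩ <;> exact ⟨j, hjT, by linarith⟩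
    rw [heq]
    exact hres
  -- Hall's theorem, buyers side
  have hexB : ∃ fB : {i // i ∈ Bp} → S, Function.Injective fB ∧
      ∀ x, fB x ∈ univ.filter (fun j => u x.val + v j ≤ a x.val j) := by
    apply (Finset.all_card_le_biUnion_card_iff_exists_injective _).mp
    intro s
    have h1 : s.card = (s.image Subtype.val).card :=
      (Finset.card_image_of_injective s Subtype.val_injective).symm
    have h2 : (s.image Subtype.val) ⊆ Bp := by
      intro i hi
      obtain ⟨x, _, rfl⟩ := Finset.mem_image.1 hi
      exact x.2
    have h3 := hallB _ h2
    rw [h1]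
    refine le_trans h3 (Finset.card_le_card ?_)
    intro j hj
    rw [Finset.mem_biUnion] at hj ⊢
    obtain ⟨i, hi, hji⟩ := hj
    obtain ⟨x, hx, rfl⟩ := Finset.mem_image.1 hi
    exact ⟨x, hx, hji⟩
  obtain ⟨fB, hfBinj, hfBmem⟩ := hexB
  -- Hall's theorem, sellers side
  have hexS : ∃ gS : {j // j ∈ Sp} → B, Function.Injective gS ∧
      ∀ x, gS x ∈ univ.filter (fun i => u i + v x.val ≤ a i x.val) := by
    apply (Finset.all_card_le_biUnion_card_iff_exists_injective _).mp
    intro s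
    have h1 : s.card = (s.image Subtype.val).card :=
      (Finset.card_image_of_injective s Subtype.val_injective).symm
    have h2 : (s.image Subtype.val) ⊆ Sp := by
      intro j hj
      obtain ⟨x, _, rfl⟩ := Finset.mem_image.1 hj
      exact x.2
    have h3 := hallS _ h2
    rw [h1]
    refine le_trans h3 (Finset.card_le_card ?_)
    intro i hi
    rw [Finset.mem_biUnion] at hi ⊢
    obtain ⟨j, hj, hij⟩ := hi
    obtain ⟨x, hx, rfl⟩ := Finset.mem_image.1 hj
    exact ⟨x, hx, hij⟩
  -- initial tight matching covering `Bp`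
  set f0 : B → Option S := fun i => if hi : i ∈ Bp then some (fB ⟨i, hi⟩) else none with hf0
  have hinj0 : ∀ i i' j, f0 i = some j → f0 i' = some j → i = i' := by
    intro i i' j hi hi'
    simp only [hf0] at hi hi'
    by_cases h1 : i ∈ Bp
    · by_cases h2 : i' ∈ Bp
      · rw [dif_pos h1] at hi
        rw [dif_pos h2] at hi'
        injection hi with e1
        injection hi' with e2
        have : (⟨i, h1⟩ : {i // i ∈ Bp}) = ⟨i', h2⟩ := hfBinj (e1.trans e2.symm)
        exact congrArg Subtype.val this
      · rw [dif_neg h2] at hi'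
        exact absurd hi' (by simp)
    · rw [dif_neg h1] at hi
      exact absurd hi (by simp)
  have htight0 : ∀ i j, f0 i = some j → u i + v j ≤ a i j := by
    intro i j hij
    simp only [hf0] at hij
    by_cases h1 : i ∈ Bp
    · rw [dif_pos h1] at hij
      injection hij with e1
      have := (Finset.mem_filter.1 (hfBmem ⟨i, h1⟩)).2
      rw [e1] at this
      exact this
    · rw [dif_neg h1] at hij
      exact absurd hij (by simp)
  have hdom0 : ∀ i, i ∈ Bp → f0 i ≠ none := by
    intro i hi
    simp only [hf0, dif_pos hi]
    simp
  -- build the combined tight matching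
  obtain ⟨f', hinj', htight', hdom', him'⟩ :
      ∃ f' : B → Option S, (∀ i i' j, f' i = some j → f' i' = some j → i = i') ∧
        (∀ i j, f' i = some j → u i + v j ≤ a i j) ∧
        (∀ i, f0 i ≠ none → f' i ≠ none) ∧ (∀ j, j ∈ Sp → ∃ i, f' i = some j) := by
    rcases Sp.eq_empty_or_nonempty with hSpe | hSpne
    · refine ⟨f0, hinj0, htight0, fun i hi => hi, ?_⟩
      rw [hSpe]; simp
    · obtain ⟨gS, hgSinj, hgSmem⟩ := hexS
      have hBne : Nonempty B := ⟨gS ⟨hSpne.choose, hSpne.choose_spec⟩⟩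
      set g : S → B := fun j => if hj : j ∈ Sp then gS ⟨j, hj⟩ else Classical.arbitrary B
        with hg
      have hgt : ∀ j ∈ Sp, u (g j) + v j ≤ a (g j) j := by
        intro j hj
        simp only [hg, dif_pos hj]
        exact (Finset.mem_filter.1 (hgSmem ⟨j, hj⟩)).2
      have hginj : ∀ j ∈ Sp, ∀ j' ∈ Sp, g j = g j' → j = j' := by
        intro j hj j' hj' he
        simp only [hg, dif_pos hj, dif_pos hj'] at he
        exact congrArg Subtype.val (hgSinj he)
      exact build a u v Sp g hgt hginj _ f0 le_rfl hinj0 htight0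
  -- accounting
  set M : Matching B S := ⟨f', hinj'⟩ with hMdef
  have hsum_u : (∑ i, u i) = ∑ i ∈ Bp, u i := by
    symm
    apply Finset.sum_subset (Finset.subset_univ Bp)
    intro i _ hi
    have hnot : ¬ 0 < u i := by simpa [hBp] using hi
    exact le_antisymm (not_lt.1 hnot) (hu i)
  have hsum_v : (∑ j, v j) = ∑ j ∈ Sp, v j := by
    symm
    apply Finset.sum_subset (Finset.subset_univ Sp)
    intro j _ hj
    have hnot : ¬ 0 < v j := by simpa [hSp] using hj
    exact le_antisymm (not_lt.1 hnot) (hv j)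
  have h1 : ∑ i ∈ Bp, u i ≤ ∑ i : B, (f' i).elim 0 (fun _ => u i) := by
    have e : ∑ i ∈ Bp, u i = ∑ i : B, if i ∈ Bp then u i else 0 := by
      rw [Finset.sum_ite_mem, Finset.univ_inter]
    rw [e]
    apply Finset.sum_le_sum
    intro i _
    by_cases hi : i ∈ Bp
    · rw [if_pos hi]
      have hne : f' i ≠ none := hdom' i (hdom0 i hi)
      cases hfi : f' i with
      | none => exact absurd hfi hne
      | some j => simp [hfi]
    · rw [if_neg hi]
      cases hfi : f' i with
      | none => simp [hfi]
      | some j => simpa [hfi] using hu i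
  have h2 : ∑ j ∈ Sp, v j ≤ ∑ i : B, (f' i).elim 0 (fun j => v j) := by
    have step1 : ∑ j ∈ Sp, v j ≤ ∑ j ∈ Sp, ∑ i : B, (if f' i = some j then v j else 0) := by
      apply Finset.sum_le_sum
      intro j hj
      obtain ⟨i0, hi0⟩ := him' j hj
      have h0 : ∀ i ∈ univ, (0:ℝ) ≤ (if f' i = some j then v j else 0) := by
        intro i _
        split_ifs
        · exact hv j
        · exact le_refl 0
      have := Finset.single_le_sum h0 (mem_univ i0)
      rwa [if_pos hi0] at this
    have step2 : ∑ j ∈ Sp, ∑ i : B, (if f' i = some j then v j else 0)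
        = ∑ i : B, ∑ j ∈ Sp, (if f' i = some j then v j else 0) := Finset.sum_comm
    have step3 : ∑ i : B, ∑ j ∈ Sp, (if f' i = some j then v j else 0)
        ≤ ∑ i : B, (f' i).elim 0 (fun j => v j) := by
      apply Finset.sum_le_sum
      intro i _
      cases hfi : f' i with
      | none => simp [hfi]
      | some j0 =>
        simp only [hfi, Option.some.injEq]
        rw [show (∑ j ∈ Sp, if j0 = j then v j else 0) = if j0 ∈ Sp then v j0 else 0 from
          Finset.sum_ite_eq Sp j0 v]
        split_ifs
        · simp
        · simpa using hv j0
    calc ∑ j ∈ Sp, v j ≤ _ := step1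
      _ = _ := step2
      _ ≤ _ := step3
  have h3 : ∑ i : B, (f' i).elim 0 (fun _ => u i) + ∑ i : B, (f' i).elim 0 (fun j => v j)
      = ∑ i : B, (f' i).elim 0 (fun j => u i + v j) := by
    rw [← Finset.sum_add_distrib]
    apply Finset.sum_congr rfl
    intro i _
    cases hfi : f' i <;> simp [hfi]
  have h4 : ∑ i : B, (f' i).elim 0 (fun j => u i + v j) ≤ ∑ i : B, (f' i).elim 0 (fun j => a i j) := by
    apply Finset.sum_le_sum
    intro i _
    cases hfi : f' i with
    | none => simp [hfi]
    | some j => simpa [hfi] using htight' i j hfi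
  have h5 : ∑ i : B, (f' i).elim 0 (fun j => a i j) = SW h c M := rfl
  have h6 : SW h c M ≤ OPT h c := SW_le_OPT h c M
  rw [hsum_u, hsum_v]
  linarith

/-- For any matching there are prices making the allocation individually rational
with subset instability exactly the optimality gap; equivalently, the stability
index attains the optimality ratio. -/
theorem exists_prices_SI_eq_opt_gap
    {B S : Type*} [Fintype B] [Fintype S]
    (h : B → S → ℝ) (c : S → ℝ)
    (hh : ∀ i j, 0 ≤ h i j) (hc : ∀ j, 0 ≤ c j)
    (ha : ∀ i j, 0 ≤ gain h c i j)
    (μ : Matching B S) :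
    ∃ p : S → ℝ, ValidPrices c μ p ∧ IndivRational h c μ p ∧
      SI h c μ p = OPT h c - SW h c μ ∧
      (0 < OPT h c → 1 - SI h c μ p / OPT h c = SW h c μ / OPT h c) := by
  classical
  obtain ⟨us, vs, hus, hvs, hfeas, hdsum⟩ := exists_dual h c ha
  set p : S → ℝ := fun j => if hj : ∃ i, μ.toFun i = some j then
      max (c j) (h hj.choose j - us hj.choose) else c j with hp
  have hpm : ∀ i j, μ.toFun i = some j → p j = max (c j) (h i j - us i) := by
    intro i j hij
    have hj : ∃ i, μ.toFun i = some j := ⟨i, hij⟩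
    have hch : hj.choose = i := μ.inj _ _ _ hj.choose_spec hij
    simp only [hp, dif_pos hj, hch]
  have hpu : ∀ j, ¬ SellerMatched μ j → p j = c j := by
    intro j hj
    simp only [SellerMatched] at hj
    simp only [hp, dif_neg hj]
  have hpc : ∀ j, c j ≤ p j := by
    intro j
    by_cases hj : ∃ i, μ.toFun i = some j
    · obtain ⟨i, hij⟩ := hj
      rw [hpm i j hij]
      exact le_max_left _ _
    · simp only [hp, dif_neg hj]
      exact le_rfl
  have hp0 : ∀ j, 0 ≤ p j := fun j => le_trans (hc j) (hpc j)
  have hv0 : ∀ j, 0 ≤ sellerU c p j := by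
    intro j
    simp only [sellerU]
    linarith [hpc j]
  have hbuyer : ∀ i j, μ.toFun i = some j → buyerU h μ p i = min (gain h c i j) (us i) := by
    intro i j hij
    have e : buyerU h μ p i = h i j - p j := by simp [buyerU, hij]
    rw [e, hpm i j hij, gain]
    rcases le_total (c j) (h i j - us i) with hle | hle
    · rw [max_eq_right hle, min_eq_right (by linarith)]
      ring
    · rw [max_eq_left hle, min_eq_left (by linarith)]
  have hu0 : ∀ i, 0 ≤ buyerU h μ p i := by
    intro i
    cases hmi : μ.toFun i with
    | none => simp [buyerU, hmi]
    | some j =>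
      rw [hbuyer i j hmi]
      exact le_min (ha i j) (hus i)
  have hule : ∀ i, buyerU h μ p i ≤ us i := by
    intro i
    cases hmi : μ.toFun i with
    | none => simpa [buyerU, hmi] using hus i
    | some j =>
      rw [hbuyer i j hmi]
      exact min_le_right _ _
  have hvle : ∀ j, sellerU c p j ≤ vs j := by
    intro j
    by_cases hj : ∃ i, μ.toFun i = some j
    · obtain ⟨i, hij⟩ := hj
      simp only [sellerU]
      rw [hpm i j hij]
      rcases le_total (c j) (h i j - us i) with hle | hle
      · rw [max_eq_right hle]
        have h1 := hfeas i j
        rw [gain] at h1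
        linarith
      · rw [max_eq_left hle]
        simpa using hvs j
    · have e : p j = c j := by simp only [hp, dif_neg hj]
      simp only [sellerU, e, sub_self]
      exact hvs j
  -- total utility equals the social welfare of μ
  have hsellersum : (∑ j, sellerU c p j) = ∑ i, (μ.toFun i).elim 0 (fun j => sellerU c p j) := by
    have e1 : ∀ j, sellerU c p j = ∑ i : B, (if μ.toFun i = some j then sellerU c p j else 0) := by
      intro j
      by_cases hj : ∃ i, μ.toFun i = some j
      · obtain ⟨i0, hi0⟩ := hj
        rw [Finset.sum_eq_single i0]
        · rw [if_pos hi0]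
        · intro i _ hne
          rw [if_neg]
          intro hcon
          exact hne (μ.inj _ _ _ hcon hi0)
        · intro habs
          exact absurd (mem_univ i0) habs
      · have hz : sellerU c p j = 0 := by
          simp only [sellerU, hp, dif_neg hj, sub_self]
        rw [hz]
        symm
        apply Finset.sum_eq_zero
        intro i _
        rw [if_neg (fun hcon => hj ⟨i, hcon⟩)]
    calc ∑ j, sellerU c p j
        = ∑ j : S, ∑ i : B, (if μ.toFun i = some j then sellerU c p j else 0) :=
          Finset.sum_congr rfl (fun j _ => e1 j)
      _ = ∑ i : B, ∑ j : S, (if μ.toFun i = some j then sellerU c p j else 0) :=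
          Finset.sum_comm
      _ = ∑ i, (μ.toFun i).elim 0 (fun j => sellerU c p j) := by
          apply Finset.sum_congr rfl
          intro i _
          cases hmi : μ.toFun i with
          | none => simp [hmi]
          | some j0 =>
            simp only [hmi, Option.some.injEq]
            rw [show (∑ j : S, if j0 = j then sellerU c p j else 0)
                = if j0 ∈ (univ : Finset S) then sellerU c p j0 else 0 from
              Finset.sum_ite_eq univ j0 _]
            simp
  have htotal : (∑ i, buyerU h μ p i) + (∑ j, sellerU c p j) = SW h c μ := by
    rw [hsellersum, ← Finset.sum_add_distrib]
    unfold SW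
    apply Finset.sum_congr rfl
    intro i _
    cases hmi : μ.toFun i with
    | none => simp [buyerU, hmi]
    | some j =>
      simp only [buyerU, hmi, Option.elim, sellerU, gain]
      ring
  obtain ⟨ν, hν⟩ := exists_OPT h c
  -- upper bound on the instability set
  have hub : ∀ x ∈ {x : ℝ | ∃ (B' : Finset B) (S' : Finset S) (μ' : Matching B S),
      Within B' S' μ' ∧ x = SW h c μ' -
        ((∑ i ∈ B', buyerU h μ p i) + (∑ j ∈ S', sellerU c p j))},
      x ≤ OPT h c - SW h c μ := by
    rintro x ⟨B', S', μ', hW, rfl⟩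
    have s1 : SW h c μ' ≤ ∑ i : B, (μ'.toFun i).elim 0 (fun j => us i + vs j) := by
      unfold SW
      apply Finset.sum_le_sum
      intro i _
      cases hmi : μ'.toFun i with
      | none => simp [hmi]
      | some j => simpa [hmi] using hfeas i j
    have s2 : ∑ i : B, (μ'.toFun i).elim 0 (fun j => us i + vs j)
        = ∑ i : B, (μ'.toFun i).elim 0 (fun _ => us i)
          + ∑ i : B, (μ'.toFun i).elim 0 (fun j => vs j) := by
      rw [← Finset.sum_add_distrib]
      apply Finset.sum_congr rfl
      intro i _
      cases hmi : μ'.toFun i <;> simp [hmi]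
    have s3 : ∑ i : B, (μ'.toFun i).elim 0 (fun _ => us i) ≤ ∑ i ∈ B', us i := by
      have e : ∑ i ∈ B', us i = ∑ i : B, if i ∈ B' then us i else 0 := by
        rw [Finset.sum_ite_mem, Finset.univ_inter]
      rw [e]
      apply Finset.sum_le_sum
      intro i _
      cases hmi : μ'.toFun i with
      | none =>
        simp only [hmi, Option.elim]
        split_ifs
        · exact hus i
        · exact le_refl 0
      | some j =>
        rw [if_pos (hW i j hmi).1]
        simp [hmi]
    have s4 : ∑ i : B, (μ'.toFun i).elim 0 (fun j => vs j) ≤ ∑ j ∈ S', vs j := by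
      have e1 : ∑ i : B, (μ'.toFun i).elim 0 (fun j => vs j)
          = ∑ i : B, ∑ j ∈ S', (if μ'.toFun i = some j then vs j else 0) := by
        apply Finset.sum_congr rfl
        intro i _
        cases hmi : μ'.toFun i with
        | none => simp [hmi]
        | some j0 =>
          simp only [hmi, Option.some.injEq]
          rw [show (∑ j ∈ S', if j0 = j then vs j else 0)
              = if j0 ∈ S' then vs j0 else 0 from Finset.sum_ite_eq S' j0 _]
          rw [if_pos (hW i j0 hmi).2]
          simp
      rw [e1, Finset.sum_comm]
      apply Finset.sum_le_sum
      intro j _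
      by_cases hex : ∃ i, μ'.toFun i = some j
      · obtain ⟨i0, hi0⟩ := hex
        rw [Finset.sum_eq_single i0]
        · rw [if_pos hi0]
        · intro i _ hne
          rw [if_neg]
          intro hcon
          exact hne (μ'.inj _ _ _ hcon hi0)
        · intro habs
          exact absurd (mem_univ i0) habs
      · rw [Finset.sum_eq_zero]
        · exact hvs j
        · intro i _
          rw [if_neg (fun hcon => hex ⟨i, hcon⟩)]
    have hBdiff : (∑ i ∈ B', us i) - (∑ i ∈ B', buyerU h μ p i)
        ≤ (∑ i, us i) - (∑ i, buyerU h μ p i) := by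
      have hs := Finset.sum_le_sum_of_subset_of_nonneg (Finset.subset_univ B')
        (fun i _ _ => sub_nonneg.2 (hule i))
      simpa [Finset.sum_sub_distrib] using hs
    have hSdiff : (∑ j ∈ S', vs j) - (∑ j ∈ S', sellerU c p j)
        ≤ (∑ j, vs j) - (∑ j, sellerU c p j) := by
      have hs := Finset.sum_le_sum_of_subset_of_nonneg (Finset.subset_univ S')
        (fun j _ _ => sub_nonneg.2 (hvle j))
      simpa [Finset.sum_sub_distrib] using hs
    linarith
  have hmem : (OPT h c - SW h c μ) ∈ {x : ℝ | ∃ (B' : Finset B) (S' : Finset S)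
      (μ' : Matching B S), Within B' S' μ' ∧ x = SW h c μ' -
        ((∑ i ∈ B', buyerU h μ p i) + (∑ j ∈ S', sellerU c p j))} := by
    refine ⟨univ, univ, ν, fun i j _ => ⟨mem_univ i, mem_univ j⟩, ?_⟩
    rw [hν, htotal]
  have hSI : SI h c μ p = OPT h c - SW h c μ := by
    unfold SI SIgen
    apply le_antisymm
    · exact csSup_le ⟨_, hmem⟩ hub
    · exact le_csSup ⟨OPT h c - SW h c μ, fun x hx => hub x hx⟩ hmem
  refine ⟨p, ⟨hp0, hpu⟩, ⟨hu0, hv0⟩, hSI, ?_⟩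
  intro hOPT
  rw [hSI]
  field_simp
  ring
end

section
/- For any matching μ of an assignment game, the half-price allocation (μ, p^half) is individually rational and satisfies SI(μ, p^half) ≤ OPT − SW(μ)/2; equivalently, when OPT > 0, (1/2)·λ(μ) ≤ J(μ, p^half). -/
open Finset

variable {B S : Type*} [Fintype B] [Fintype S]

open Classical in
/-- The half price vector: `c j + a i j / 2` for a seller `j` matched to `i`, and `c j`
for unmatched sellers. -/
noncomputable def halfPrice (h : B → S → ℝ) (c : S → ℝ) (μ : Matching B S) (j : S) : ℝ :=
  if hj : SellerMatched μ j then c j + gain h c hj.choose j / 2 else c j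

/-- The half-price allocation is individually rational and achieves at least half
of the optimal stability index. -/
theorem half_prices_half_stable
    {B S : Type*} [Fintype B] [Fintype S]
    (h : B → S → ℝ) (c : S → ℝ)
    (hh : ∀ i j, 0 ≤ h i j) (hc : ∀ j, 0 ≤ c j)
    (ha : ∀ i j, 0 ≤ gain h c i j)
    (μ : Matching B S) :
    IndivRational h c μ (halfPrice h c μ) ∧
      SI h c μ (halfPrice h c μ) ≤ OPT h c - SW h c μ / 2 ∧
      (0 < OPT h c →
        (1 / 2) * (SW h c μ / OPT h c) ≤ 1 - SI h c μ (halfPrice h c μ) / OPT h c) := by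

  classical
  set p := halfPrice h c μ with hp
  -- buyer utility formula under half prices
  have hbu : ∀ i, buyerU h μ p i = (μ.toFun i).elim 0 (fun j => gain h c i j / 2) := by
    intro i
    unfold buyerU
    cases hmi : μ.toFun i with
    | none => simp
    | some j =>
      simp only [Option.elim]
      have hj : SellerMatched μ j := ⟨i, hmi⟩
      have hch : hj.choose = i := μ.inj _ _ _ hj.choose_spec hmi
      rw [hp]
      simp only [halfPrice, dif_pos hj, hch, gain]
      ring
  -- seller utility formula under half prices
  have hsv : ∀ j, sellerU c p j
      = ∑ i : B, (if μ.toFun i = some j then gain h c i j / 2 else 0) := by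
    intro j
    unfold sellerU
    rw [hp]
    by_cases hj : SellerMatched μ j
    · simp only [halfPrice, dif_pos hj]
      rw [Finset.sum_eq_single hj.choose]
      · rw [if_pos hj.choose_spec]; ring
      · intro b _ hb
        rw [if_neg]
        intro hbj
        exact hb (μ.inj _ _ _ hbj hj.choose_spec)
      · intro hmem; exact absurd (Finset.mem_univ _) hmem
    · simp only [halfPrice, dif_neg hj]
      rw [Finset.sum_eq_zero]
      · ring
      · intro b _
        rw [if_neg]
        intro hbj
        exact hj ⟨b, hbj⟩
  have hunn : ∀ i, 0 ≤ buyerU h μ p i := by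
    intro i
    rw [hbu]
    cases hmi : μ.toFun i with
    | none => simp
    | some j => simpa using by linarith [ha i j]
  have hvnn : ∀ j, 0 ≤ sellerU c p j := by
    intro j
    rw [hsv]
    refine Finset.sum_nonneg fun b _ => ?_
    split
    · linarith [ha b j]
    · exact le_rfl
  have hIR : IndivRational h c μ p := ⟨hunn, hvnn⟩
  -- OPT is an upper bound on SW of any matching
  have hbdd : BddAbove (Set.range (SW h c (B := B) (S := S))) := by
    refine ⟨∑ i : B, ∑ j : S, gain h c i j, ?_⟩
    rintro x ⟨μ0, rfl⟩
    refine Finset.sum_le_sum fun i _ => ?_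
    cases hmi : μ0.toFun i with
    | none =>
      simpa using Finset.sum_nonneg fun j _ => ha i j
    | some j =>
      simpa using Finset.single_le_sum (fun j _ => ha i j) (Finset.mem_univ j)
  have hle_opt : ∀ μ0 : Matching B S, SW h c μ0 ≤ OPT h c := fun μ0 =>
    le_csSup hbdd ⟨μ0, rfl⟩
  -- the key bound on subset instability
  have hSI : SI h c μ p ≤ OPT h c - SW h c μ / 2 := by
    unfold SI SIgen
    apply csSup_le
    · exact ⟨_, ∅, ∅, ⟨fun _ => none, fun i i' j hi => by simp at hi⟩,
        fun i j hij => by simp [Matching.toFun] at hij, rfl⟩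
    · rintro x ⟨B', S', μ', hW, rfl⟩
      -- the extension of μ' by μ (restricted outside the submarket)
      have hbind : ∀ i j,
          (μ.toFun i).bind (fun j => if j ∈ S' then none else some j) = some j ↔
            (μ.toFun i = some j ∧ j ∉ S') := by
        intro i j
        constructor
        · intro hb
          obtain ⟨j0, hj0, hg⟩ := Option.bind_eq_some_iff.mp hb
          by_cases hjS : j0 ∈ S'
          · simp [hjS] at hg
          · simp only [if_neg hjS, Option.some.injEq] at hg
            subst hg
            exact ⟨hj0, hjS⟩
        · rintro ⟨h1, h2⟩
          rw [h1]
          simp [h2]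
      set f : B → Option S := fun i =>
        if i ∈ B' then μ'.toFun i
        else (μ.toFun i).bind (fun j => if j ∈ S' then none else some j) with hf
      have hinj : ∀ i i' j, f i = some j → f i' = some j → i = i' := by
        intro i i' j hi hi'
        by_cases hiB : i ∈ B' <;> by_cases hi'B : i' ∈ B' <;>
          simp only [hf, if_pos, if_neg, hiB, hi'B, if_true, if_false] at hi hi'
        · exact μ'.inj _ _ _ hi hi'
        · exact absurd (hW i j hi).2 ((hbind i' j).mp hi').2
        · exact absurd (hW i' j hi').2 ((hbind i j).mp hi).2
        · exact μ.inj _ _ _ ((hbind i j).mp hi).1 ((hbind i' j).mp hi').1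
      set μstar : Matching B S := ⟨f, hinj⟩ with hμstar
      have hopt : SW h c μstar ≤ OPT h c := hle_opt μstar
      have hμ'none : ∀ i, i ∉ B' → μ'.toFun i = none := by
        intro i hi
        cases hm : μ'.toFun i with
        | none => rfl
        | some j => exact absurd (hW i j hm).1 hi
      -- key inequality
      have key : SW h c μ ≤ 2 * SW h c μstar - 2 * SW h c μ'
          + 2 * (∑ i ∈ B', buyerU h μ p i) + 2 * (∑ j ∈ S', sellerU c p j) := by
        have h1 : (∑ i : B, if i ∈ B' then buyerU h μ p i else 0)
            = ∑ i ∈ B', buyerU h μ p i := by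
          rw [Finset.sum_ite_mem, Finset.univ_inter]
        have h2 : (∑ j ∈ S', sellerU c p j)
            = ∑ i : B, ∑ j ∈ S', (if μ.toFun i = some j then gain h c i j / 2 else 0) := by
          rw [Finset.sum_comm]
          exact Finset.sum_congr rfl fun j _ => hsv j
        have term : ∀ i : B, (μ.toFun i).elim 0 (gain h c i)
            ≤ 2 * ((f i).elim 0 (gain h c i)) - 2 * ((μ'.toFun i).elim 0 (gain h c i))
              + 2 * (if i ∈ B' then buyerU h μ p i else 0)
              + 2 * (∑ j ∈ S', if μ.toFun i = some j then gain h c i j / 2 else 0) := by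
          intro i
          have hinner : (∑ j ∈ S', if μ.toFun i = some j then gain h c i j / 2 else 0)
              = (μ.toFun i).elim 0 (fun j0 => if j0 ∈ S' then gain h c i j0 / 2 else 0) := by
            cases hmi : μ.toFun i with
            | none => simp
            | some j0 =>
              simp only [Option.elim, Option.some.injEq]
              exact Finset.sum_ite_eq S' j0 (fun j => gain h c i j / 2)
          rw [hinner]
          cases hmi : μ.toFun i with
          | none =>
            by_cases hiB : i ∈ B'
            · have hfi : f i = μ'.toFun i := by simp [hf, hiB]
              rw [hfi, if_pos hiB, hbu i, hmi]
              simp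
            · have hfi : f i = none := by simp [hf, hiB, hmi]
              rw [hfi, if_neg hiB, hμ'none i hiB]
              simp
          | some j0 =>
            by_cases hiB : i ∈ B'
            · have hfi : f i = μ'.toFun i := by simp [hf, hiB]
              rw [hfi, if_pos hiB, hbu i, hmi]
              simp only [Option.elim]
              by_cases hjS : j0 ∈ S'
              · rw [if_pos hjS]; linarith [ha i j0]
              · rw [if_neg hjS]; linarith [ha i j0]
            · by_cases hjS : j0 ∈ S'
              · have hfi : f i = none := by simp [hf, hiB, hmi, hjS]
                rw [hfi, if_neg hiB, hμ'none i hiB]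
                simp only [Option.elim, if_pos hjS]
                linarith
              · have hfi : f i = some j0 := by simp [hf, hiB, hmi, hjS]
                rw [hfi, if_neg hiB, hμ'none i hiB]
                simp only [Option.elim, if_neg hjS]
                linarith [ha i j0]
        have hsum := Finset.sum_le_sum (fun i (_ : i ∈ Finset.univ) => term i)
        rw [Finset.sum_add_distrib, Finset.sum_add_distrib, Finset.sum_sub_distrib,
          ← Finset.mul_sum, ← Finset.mul_sum, ← Finset.mul_sum, ← Finset.mul_sum, h1] at hsum
        calc SW h c μ = ∑ i : B, (μ.toFun i).elim 0 (gain h c i) := rfl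
          _ ≤ _ := hsum
          _ = 2 * SW h c μstar - 2 * SW h c μ'
              + 2 * (∑ i ∈ B', buyerU h μ p i) + 2 * (∑ j ∈ S', sellerU c p j) := by
            rw [h2]; rfl
      linarith [hopt, key]
  refine ⟨hIR, hSI, fun hOPT => ?_⟩
  have h3 : SW h c μ / 2 ≤ OPT h c - SI h c μ p := by linarith
  calc (1 / 2) * (SW h c μ / OPT h c) = (SW h c μ / 2) / OPT h c := by ring
    _ ≤ (OPT h c - SI h c μ p) / OPT h c := by gcongr
    _ = 1 - SI h c μ p / OPT h c := by
        rw [sub_div, div_self (ne_of_gt hOPT)]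
end

section
/- Let (μ, p) be an allocation of an assignment game that lies in the κ-approximate core for some κ ∈ [0,1]. Then SI(μ, p) ≤ (1 − κ)·OPT; equivalently, when OPT > 0, κ ≤ J(μ, p). -/
open Finset

variable {B S : Type*} [Fintype B] [Fintype S]

/-- Membership in the κ-approximate core. -/
def ApproxCore (h : B → S → ℝ) (c : S → ℝ) (μ : Matching B S) (p : S → ℝ) (κ : ℝ) : Prop :=
  (∀ i, 0 ≤ buyerU h μ p i) ∧ (∀ j, 0 ≤ sellerU c p j) ∧
  ∀ i j, κ * gain h c i j ≤ buyerU h μ p i + sellerU c p j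

/-- Summing a nonnegative function over the sellers matched (within `B'`) by a
matching contained in `(B', S')` is at most the sum over all of `S'`. -/
lemma sum_option_le {B S : Type*} (μ' : Matching B S) (B' : Finset B) (S' : Finset S)
    (hW : Within B' S' μ') (w : S → ℝ) (hw : ∀ j, 0 ≤ w j) :
    ∑ i ∈ B', (μ'.toFun i).elim 0 w ≤ ∑ j ∈ S', w j := by
  classical
  have h1 : ∀ i ∈ B', (μ'.toFun i).elim 0 w
      = ∑ j ∈ S', if μ'.toFun i = some j then w j else 0 := by
    intro i _
    cases hmi : μ'.toFun i with
    | none => simp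
    | some j =>
      have hj : j ∈ S' := (hW i j hmi).2
      rw [Finset.sum_eq_single j]
      · simp
      · intro b _ hne
        simp [Ne.symm hne]
      · intro hj'; exact absurd hj hj'
  rw [Finset.sum_congr rfl h1, Finset.sum_comm]
  apply Finset.sum_le_sum
  intro j _
  by_cases hex : ∃ i ∈ B', μ'.toFun i = some j
  · obtain ⟨i0, hi0, hm0⟩ := hex
    rw [Finset.sum_eq_single i0]
    · simp [hm0]
    · intro b _ hne
      by_cases hb' : μ'.toFun b = some j
      · exact absurd (μ'.inj b i0 j hb' hm0) hne
      · simp [hb']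
    · intro hmem; exact absurd hi0 hmem
  · push_neg at hex
    rw [Finset.sum_eq_zero]
    · exact hw j
    · intro i hi; simp [hex i hi]

/-- An allocation in the κ-approximate core has subset instability at most
`(1 - κ) · OPT`; equivalently, its stability index is at least κ. -/
theorem approxCore_SI_bound
    {B S : Type*} [Fintype B] [Fintype S]
    (h : B → S → ℝ) (c : S → ℝ)
    (hh : ∀ i j, 0 ≤ h i j) (hc : ∀ j, 0 ≤ c j)
    (ha : ∀ i j, 0 ≤ gain h c i j)
    (μ : Matching B S) (p : S → ℝ) (hp : ValidPrices c μ p)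
    (κ : ℝ) (hκ0 : 0 ≤ κ) (hκ1 : κ ≤ 1)
    (hcore : ApproxCore h c μ p κ) :
    SI h c μ p ≤ (1 - κ) * OPT h c ∧
      (0 < OPT h c → κ ≤ 1 - SI h c μ p / OPT h c) := by
  classical
  obtain ⟨hu, hv, hcore'⟩ := hcore
  -- The range of SW is bounded above.
  have hSWle : ∀ μ', SW h c μ' ≤ ∑ i : B, ∑ j : S, gain h c i j := by
    intro μ'
    apply Finset.sum_le_sum
    intro i _
    cases hmi : μ'.toFun i with
    | none =>
      simp only [Option.elim_none]
      exact Finset.sum_nonneg fun j _ => ha i j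
    | some j =>
      simp only [Option.elim_some]
      exact Finset.single_le_sum (fun j' _ => ha i j') (Finset.mem_univ j)
  have hbdd : BddAbove (Set.range (SW h c)) := by
    refine ⟨∑ i : B, ∑ j : S, gain h c i j, ?_⟩
    rintro x ⟨μ', rfl⟩
    exact hSWle μ'
  have hopt : ∀ μ', SW h c μ' ≤ OPT h c := fun μ' => le_csSup hbdd ⟨μ', rfl⟩
  have hOPT0 : 0 ≤ OPT h c := by
    have h0 := hopt ⟨fun _ => none, by intro i i' j hj _; exact absurd hj.symm (Option.some_ne_none j)⟩
    simpa [SW] using h0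
  have hSI : SI h c μ p ≤ (1 - κ) * OPT h c := by
    apply Real.sSup_le
    · rintro x ⟨B', S', μ', hW, rfl⟩
      have hκSW : κ * SW h c μ'
          ≤ (∑ i ∈ B', buyerU h μ p i) + ∑ j ∈ S', sellerU c p j := by
        have step1 : κ * SW h c μ'
            ≤ ∑ i ∈ B', (μ'.toFun i).elim 0
                (fun j => buyerU h μ p i + sellerU c p j) := by
          rw [SW, Finset.mul_sum]
          have hpt : ∀ i : B, κ * (μ'.toFun i).elim 0 (fun j => gain h c i j)
              ≤ (μ'.toFun i).elim 0 (fun j => buyerU h μ p i + sellerU c p j) := by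
            intro i
            cases hmi : μ'.toFun i with
            | none => simp
            | some j => simpa using hcore' i j
          calc ∑ i : B, κ * (μ'.toFun i).elim 0 (fun j => gain h c i j)
              ≤ ∑ i : B, (μ'.toFun i).elim 0
                  (fun j => buyerU h μ p i + sellerU c p j) :=
                Finset.sum_le_sum fun i _ => hpt i
            _ = ∑ i ∈ B', (μ'.toFun i).elim 0
                  (fun j => buyerU h μ p i + sellerU c p j) := by
                refine (Finset.sum_subset (Finset.subset_univ B') ?_).symm
                intro i _ hi
                cases hmi : μ'.toFun i with
                | none => simp
                | some j => exact absurd (hW i j hmi).1 hi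
        have step2 : ∑ i ∈ B', (μ'.toFun i).elim 0
              (fun j => buyerU h μ p i + sellerU c p j)
            ≤ (∑ i ∈ B', buyerU h μ p i)
              + ∑ i ∈ B', (μ'.toFun i).elim 0 (fun j => sellerU c p j) := by
          rw [← Finset.sum_add_distrib]
          apply Finset.sum_le_sum
          intro i _
          cases hmi : μ'.toFun i with
          | none => simpa using hu i
          | some j => simp
        have step3 : ∑ i ∈ B', (μ'.toFun i).elim 0 (fun j => sellerU c p j)
            ≤ ∑ j ∈ S', sellerU c p j :=
          sum_option_le μ' B' S' hW _ hv
        linarith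
      have hSWopt := hopt μ'
      have h2 : (1 - κ) * SW h c μ' ≤ (1 - κ) * OPT h c :=
        mul_le_mul_of_nonneg_left hSWopt (by linarith)
      have h3 : (1 - κ) * SW h c μ' = SW h c μ' - κ * SW h c μ' := by ring
      linarith
    · exact mul_nonneg (by linarith) hOPT0
  refine ⟨hSI, fun hpos => ?_⟩
  have hdiv : SI h c μ p / OPT h c ≤ 1 - κ :=
    (div_le_iff₀ hpos).mpr (by linarith)
  linarith
end

section
/- For every κ ∈ [0,1), there exists an assignment game with OPT > 0 and an allocation (μ, p) of this game such that OPT − SW(μ) ≤ SI(μ, p) ≤ (1 − κ)·OPT (so that, in particular, κ ≤ J(μ,p) ≤ λ(μ)), while for no constant κ' ∈ (0, 1] the allocation (μ, p) is in the κ'-approximate core. (A witness is the game with B = {a, b}, S = {α, β}, generated utilities a(a,α) = κ, a(b,β) = 1 − κ and 0 for the other two pairs, where μ matches only a with α at a price equal to the seller's valuation.) -/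
open Finset

variable {B S : Type*} [Fintype B] [Fintype S]

/-- For every `κ ∈ [0,1)` there is an assignment game (on two buyers and two
sellers) with `OPT > 0` and an allocation whose subset instability lies between
the optimality gap and `(1 - κ) · OPT`, yet which belongs to no κ'-approximate
core for any `κ' ∈ (0, 1]`. -/
theorem exists_stable_index_without_approx_core
    (κ : ℝ) (hκ0 : 0 ≤ κ) (hκ1 : κ < 1) :
    ∃ (h : Fin 2 → Fin 2 → ℝ) (c : Fin 2 → ℝ) (μ : Matching (Fin 2) (Fin 2))
      (p : Fin 2 → ℝ),
      (∀ i j, 0 ≤ h i j) ∧ (∀ j, 0 ≤ c j) ∧ (∀ i j, 0 ≤ gain h c i j) ∧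
      ValidPrices c μ p ∧
      0 < OPT h c ∧
      OPT h c - SW h c μ ≤ SI h c μ p ∧
      SI h c μ p ≤ (1 - κ) * OPT h c ∧
      (∀ κ' : ℝ, 0 < κ' → κ' ≤ 1 → ¬ ApproxCore h c μ p κ') := by

  classical
  set h : Fin 2 → Fin 2 → ℝ := ![![κ, 0], ![0, 1 - κ]] with hh
  set c : Fin 2 → ℝ := 0 with hc
  set p : Fin 2 → ℝ := 0 with hp
  set μ : Matching (Fin 2) (Fin 2) :=
    ⟨fun i => if i = 0 then some 0 else none, by decide⟩ with hμ
  set μid : Matching (Fin 2) (Fin 2) := ⟨fun i => some i, by decide⟩ with hμid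
  set μ2 : Matching (Fin 2) (Fin 2) :=
    ⟨fun i => if i = 1 then some 1 else none, by decide⟩ with hμ2
  have h00 : h 0 0 = κ := by simp [hh]
  have h01 : h 0 1 = 0 := by simp [hh]
  have h10 : h 1 0 = 0 := by simp [hh]
  have h11 : h 1 1 = 1 - κ := by simp [hh]
  have hg : ∀ i j, gain h c i j = h i j := by intro i j; simp [gain, hc, hp]
  -- bounds on the per-buyer terms of any matching
  have t0le : ∀ μ' : Matching (Fin 2) (Fin 2),
      (μ'.toFun 0).elim 0 (fun j => gain h c 0 j) ≤ κ := by
    intro μ'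
    cases hm : μ'.toFun 0 with
    | none => simpa using hκ0
    | some j =>
      fin_cases j <;> simp [hg, h00, h01] <;> linarith
  have t1le : ∀ μ' : Matching (Fin 2) (Fin 2),
      (μ'.toFun 1).elim 0 (fun j => gain h c 1 j) ≤ 1 - κ := by
    intro μ'
    cases hm : μ'.toFun 1 with
    | none => simp; linarith
    | some j =>
      fin_cases j <;> simp [hg, h10, h11] <;> linarith
  have hSWeq : ∀ μ' : Matching (Fin 2) (Fin 2), SW h c μ' =
      (μ'.toFun 0).elim 0 (fun j => gain h c 0 j) +
      (μ'.toFun 1).elim 0 (fun j => gain h c 1 j) := by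
    intro μ'; simp [SW, Fin.sum_univ_two]
  have hSWle : ∀ μ' : Matching (Fin 2) (Fin 2), SW h c μ' ≤ 1 := by
    intro μ'
    rw [hSWeq]
    have := t0le μ'
    have := t1le μ'
    linarith
  have hSWμ : SW h c μ = κ := by
    rw [hSWeq]
    simp [hμ, hg, h00]
  have hSWid : SW h c μid = 1 := by
    rw [hSWeq]
    simp [hμid, hg, h00, h11]
  have hSWμ2 : SW h c μ2 = 1 - κ := by
    rw [hSWeq]
    simp [hμ2, hg, h11]
  have hOPT : OPT h c = 1 := by
    apply le_antisymm
    · refine csSup_le ⟨SW h c μ, μ, rfl⟩ ?_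
      rintro x ⟨μ', rfl⟩; exact hSWle μ'
    · apply le_csSup
      · exact ⟨1, by rintro x ⟨μ', rfl⟩; exact hSWle μ'⟩
      · exact ⟨μid, hSWid⟩
  -- utilities
  have hu0 : buyerU h μ p 0 = κ := by simp [buyerU, hμ, hp, h00]
  have hu1 : buyerU h μ p 1 = 0 := by simp [buyerU, hμ, hp]
  have hunn : ∀ i, 0 ≤ buyerU h μ p i := by
    intro i
    match i with
    | 0 => rw [hu0]; exact hκ0
    | 1 => rw [hu1]
  have hv : ∀ j, sellerU c p j = 0 := by intro j; simp [sellerU, hc, hp]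
  -- the SI set
  have hSIle : ∀ x ∈ {x | ∃ (B' : Finset (Fin 2)) (S' : Finset (Fin 2))
      (μ' : Matching (Fin 2) (Fin 2)), Within B' S' μ' ∧
      x = SW h c μ' - ((∑ i ∈ B', buyerU h μ p i) + (∑ j ∈ S', sellerU c p j))},
      x ≤ 1 - κ := by
    rintro x ⟨B', S', μ', hW, rfl⟩
    have hvs : (∑ j ∈ S', sellerU c p j) = 0 := by
      apply Finset.sum_eq_zero; intro j _; exact hv j
    rw [hvs]
    by_cases h0 : (0 : Fin 2) ∈ B'
    · have : κ ≤ ∑ i ∈ B', buyerU h μ p i := by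
        rw [← hu0]
        exact Finset.single_le_sum (fun i _ => hunn i) h0
      have := hSWle μ'
      linarith
    · have hm0 : μ'.toFun 0 = none := by
        cases hm : μ'.toFun 0 with
        | none => rfl
        | some j => exact absurd (hW 0 j hm).1 h0
      have hs : SW h c μ' ≤ 1 - κ := by
        rw [hSWeq, hm0]
        have := t1le μ'
        simpa using this
      have hsum : 0 ≤ ∑ i ∈ B', buyerU h μ p i :=
        Finset.sum_nonneg (fun i _ => hunn i)
      linarith
  have hSImem : (1 - κ) ∈ {x | ∃ (B' : Finset (Fin 2)) (S' : Finset (Fin 2))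
      (μ' : Matching (Fin 2) (Fin 2)), Within B' S' μ' ∧
      x = SW h c μ' - ((∑ i ∈ B', buyerU h μ p i) + (∑ j ∈ S', sellerU c p j))} := by
    refine ⟨{1}, {1}, μ2, ?_, ?_⟩
    · intro i j hij
      match i with
      | 0 => exact absurd hij (by simp [hμ2])
      | 1 =>
        obtain rfl : (1 : Fin 2) = j := Option.some.inj hij
        exact ⟨Finset.mem_singleton_self 1, Finset.mem_singleton_self 1⟩
    rw [hSWμ2]
    simp [hu1, hv]
  have hSI : SI h c μ p = 1 - κ := by
    apply le_antisymm
    · exact csSup_le ⟨1 - κ, hSImem⟩ hSIle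
    · exact le_csSup ⟨1 - κ, hSIle⟩ hSImem
  refine ⟨h, c, μ, p, ?_, ?_, ?_, ?_, ?_, ?_, ?_, ?_⟩
  · intro i j; fin_cases i <;> fin_cases j <;>
      simp [h00, h01, h10, h11] <;> linarith
  · intro j; simp [hc, hp]
  · intro i j; rw [hg]; fin_cases i <;> fin_cases j <;>
      simp [h00, h01, h10, h11] <;> linarith
  · exact ⟨fun j => by simp [hp], fun j _ => by simp [hp, hc]⟩
  · rw [hOPT]; norm_num
  · rw [hOPT, hSWμ, hSI]
  · rw [hOPT, hSI]; ring_nf; linarith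
  · rintro κ' hκ'0 hκ'1 ⟨_, _, hcore⟩
    have := hcore 1 1
    rw [hg, h11, hu1, hv] at this
    nlinarith
end

section
/- Let (μ, p) be an individually rational allocation of an assignment game in which a(i,j) > 0 for every pair (i,j) ∈ B × S, and set κ(μ,p) := min over (i,j) ∈ B × S of (u_i(μ,p) + v_j(μ,p))/a(i,j). Then κ(μ,p) equals the minimum, over all subsets B' ⊆ B, S' ⊆ S and all nonempty matchings μ' between B' and S' (matchings with at least one matched pair), of the ratio (Σ_{i∈B'} u_i(μ,p) + Σ_{j∈S'} v_j(μ,p)) / SW(μ'). In particular, (μ, p) belongs to the κ(μ,p)-approximate core. -/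
open Finset

variable {B S : Type*} [Fintype B] [Fintype S]

/-- For an individually rational allocation of a game with strictly positive
generated utilities, the worst pairwise ratio `(u_i + v_j) / a i j` equals the
worst ratio of coalition welfare to achievable welfare over all nonempty
sub-market matchings, and the allocation lies in the corresponding
approximate core. -/
theorem kappa_characterization
    {B S : Type*} [Fintype B] [Fintype S] [Nonempty B] [Nonempty S]
    (h : B → S → ℝ) (c : S → ℝ)
    (hh : ∀ i j, 0 ≤ h i j) (hc : ∀ j, 0 ≤ c j)
    (ha : ∀ i j, 0 < gain h c i j)
    (μ : Matching B S) (p : S → ℝ) (hp : ValidPrices c μ p)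
    (hIR : IndivRational h c μ p) :
    (Finset.univ.inf' Finset.univ_nonempty
        (fun ij : B × S => (buyerU h μ p ij.1 + sellerU c p ij.2) / gain h c ij.1 ij.2))
      = sInf {x | ∃ (B' : Finset B) (S' : Finset S) (μ' : Matching B S),
          Within B' S' μ' ∧ (∃ i j, μ'.toFun i = some j) ∧
          x = ((∑ i ∈ B', buyerU h μ p i) + (∑ j ∈ S', sellerU c p j)) / SW h c μ'} ∧
    ApproxCore h c μ p
      (Finset.univ.inf' Finset.univ_nonempty
        (fun ij : B × S => (buyerU h μ p ij.1 + sellerU c p ij.2) / gain h c ij.1 ij.2)) := by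
  classical
  set u := buyerU h μ p with hu_def
  set v := sellerU c p with hv_def
  have hu : ∀ i, 0 ≤ u i := hIR.1
  have hv : ∀ j, 0 ≤ v j := hIR.2
  set κ := (Finset.univ.inf' Finset.univ_nonempty
      (fun ij : B × S => (u ij.1 + v ij.2) / gain h c ij.1 ij.2)) with hκdef
  have hκle : ∀ i j, κ * gain h c i j ≤ u i + v j := by
    intro i j
    have h1 : κ ≤ (u i + v j) / gain h c i j :=
      Finset.inf'_le _ (Finset.mem_univ (i, j))
    calc κ * gain h c i j ≤ ((u i + v j) / gain h c i j) * gain h c i j :=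
          mul_le_mul_of_nonneg_right h1 (le_of_lt (ha i j))
      _ = u i + v j := div_mul_cancel₀ _ (ne_of_gt (ha i j))
  set X : Set ℝ := {x | ∃ (B' : Finset B) (S' : Finset S) (μ' : Matching B S),
          Within B' S' μ' ∧ (∃ i j, μ'.toFun i = some j) ∧
          x = ((∑ i ∈ B', u i) + (∑ j ∈ S', v j)) / SW h c μ'} with hXdef
  -- every element of X is at least κ
  have key : ∀ x ∈ X, κ ≤ x := by
    rintro x ⟨B', S', μ', hW, ⟨i₀, j₀, hm⟩, rfl⟩
    have hterm : ∀ i : B, 0 ≤ (μ'.toFun i).elim 0 (fun j => gain h c i j) := by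
      intro i
      cases hcase : μ'.toFun i with
      | none => simp
      | some j => simpa using le_of_lt (ha i j)
    have hSWpos : 0 < SW h c μ' := by
      apply Finset.sum_pos' (fun i _ => hterm i)
      refine ⟨i₀, Finset.mem_univ _, ?_⟩
      rw [hm]; simpa using ha i₀ j₀
    rw [le_div_iff₀ hSWpos]
    -- step 1: κ * SW ≤ ∑ i, elim 0 (fun j => u i + v j)
    have step1 : κ * SW h c μ' ≤ ∑ i : B, (μ'.toFun i).elim 0 (fun j => u i + v j) := by
      rw [SW, Finset.mul_sum]
      apply Finset.sum_le_sum
      intro i _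
      cases hcase : μ'.toFun i with
      | none => simp
      | some j => simpa using hκle i j
    -- step 2: ∑ i, elim 0 (fun j => u i + v j) ≤ ∑_{B'} u + ∑_{S'} v
    set P : Finset B := Finset.univ.filter (fun i => (μ'.toFun i).isSome) with hPdef
    set σ : B → S := fun i => (μ'.toFun i).getD (Classical.arbitrary S) with hσdef
    have hσ : ∀ i ∈ P, μ'.toFun i = some (σ i) := by
      intro i hi
      rw [hPdef, Finset.mem_filter] at hi
      obtain ⟨j, hj⟩ := Option.isSome_iff_exists.mp hi.2
      simp [hσdef, hj]
    have hPsub : P ⊆ B' := by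
      intro i hi
      exact (hW i (σ i) (hσ i hi)).1
    have himgsub : P.image σ ⊆ S' := by
      intro j hj
      obtain ⟨i, hi, rfl⟩ := Finset.mem_image.mp hj
      exact (hW i (σ i) (hσ i hi)).2
    have hsum_eq : ∑ i : B, (μ'.toFun i).elim 0 (fun j => u i + v j)
        = ∑ i ∈ P, (u i + v (σ i)) := by
      rw [← Finset.sum_subset (Finset.subset_univ P)]
      · exact Finset.sum_congr rfl (fun i hi => by rw [hσ i hi]; simp)
      · intro i _ hi
        rw [hPdef, Finset.mem_filter] at hi
        have : μ'.toFun i = none := by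
          cases hcase : μ'.toFun i with
          | none => rfl
          | some j => exact absurd ⟨Finset.mem_univ i, by rw [hcase]; rfl⟩ hi
        simp [this]
    have step2 : ∑ i : B, (μ'.toFun i).elim 0 (fun j => u i + v j)
        ≤ (∑ i ∈ B', u i) + (∑ j ∈ S', v j) := by
      rw [hsum_eq, Finset.sum_add_distrib]
      have h1 : ∑ i ∈ P, u i ≤ ∑ i ∈ B', u i :=
        Finset.sum_le_sum_of_subset_of_nonneg hPsub (fun i _ _ => hu i)
      have h2 : ∑ i ∈ P, v (σ i) ≤ ∑ j ∈ S', v j := by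
        rw [← Finset.sum_image (f := v) (g := σ) ?_]
        · exact Finset.sum_le_sum_of_subset_of_nonneg himgsub (fun j _ _ => hv j)
        · intro i hi i' hi' hσeq
          exact μ'.inj i i' (σ i) (hσ i hi) (by rw [hσeq]; exact hσ i' hi')
      linarith
    linarith
  -- κ belongs to X via a singleton matching at the minimizing pair
  have hκmem : κ ∈ X := by
    obtain ⟨ij, _, hij⟩ := Finset.exists_mem_eq_inf' (Finset.univ_nonempty)
      (fun ij : B × S => (u ij.1 + v ij.2) / gain h c ij.1 ij.2)
    obtain ⟨i₀, j₀⟩ := ij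
    refine ⟨{i₀}, {j₀}, ⟨fun i => if i = i₀ then some j₀ else none, ?_⟩, ?_, ?_, ?_⟩
    · intro i i' j hi hi'
      by_cases h1 : i = i₀ <;> by_cases h2 : i' = i₀ <;> simp_all
    · intro i j hij'
      by_cases h1 : i = i₀ <;> simp_all
    · exact ⟨i₀, j₀, by simp⟩
    · have hSW : SW h c ⟨fun i => if i = i₀ then some j₀ else none, by
          intro i i' j hi hi'
          by_cases h1 : i = i₀ <;> by_cases h2 : i' = i₀ <;> simp_all⟩
          = gain h c i₀ j₀ := by
        rw [SW]
        rw [Finset.sum_eq_single i₀]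
        · simp
        · intro i _ hne; simp [hne]
        · intro hni; exact absurd (Finset.mem_univ i₀) hni
      rw [hSW]
      simpa using hij
  refine ⟨le_antisymm (le_csInf ⟨κ, hκmem⟩ key) (csInf_le ⟨κ, key⟩ hκmem), hu, hv, hκle⟩
end

section
/- Let (μ, p) be an allocation of an assignment game such that a(i, μ(i)) ≥ 0 for every matched pair (i, μ(i)). Then there exists a nonnegative price vector p' : S → ℝ such that (μ, p') is individually rational and SI(μ, p') ≤ SI(μ, p). -/
open Finset

variable {B S : Type*} [Fintype B] [Fintype S]

private lemma sum_partner' {B S : Type*} [Fintype B] [Fintype S] (μ : Matching B S) (f : S → ℝ)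
    (h0 : ∀ j, ¬ SellerMatched μ j → f j = 0) :
    ∑ j : S, f j = ∑ i : B, (μ.toFun i).elim 0 f := by
  classical
  have step1 : ∀ i : B, (μ.toFun i).elim 0 f = ∑ j : S, if μ.toFun i = some j then f j else 0 := by
    intro i
    cases hμ : μ.toFun i with
    | none => simp
    | some j₀ => simp
  rw [Finset.sum_congr rfl (fun i _ => step1 i), Finset.sum_comm]
  apply Finset.sum_congr rfl
  intro j _
  by_cases hj : SellerMatched μ j
  · obtain ⟨i₀, hi₀⟩ := hj
    rw [Finset.sum_eq_single i₀]
    · simp [hi₀]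
    · intro i _ hne
      have : ¬ (μ.toFun i = some j) := fun hcon => hne (μ.inj i i₀ j hcon hi₀)
      simp [this]
    · intro hcon; exact absurd (mem_univ i₀) hcon
  · rw [h0 j hj]
    simp

private lemma SW_le_bound {B S : Type*} [Fintype B] [Fintype S]
    (h : B → S → ℝ) (c : S → ℝ) (μ' : Matching B S) :
    SW h c μ' ≤ ∑ i : B, ∑ j : S, |gain h c i j| := by
  apply Finset.sum_le_sum
  intro i _
  cases hμ : μ'.toFun i with
  | none =>
    simp only [Option.elim]
    exact Finset.sum_nonneg (fun j _ => abs_nonneg _)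
  | some j₀ =>
    simp only [Option.elim]
    exact le_trans (le_abs_self _)
      (Finset.single_le_sum (fun j _ => abs_nonneg (gain h c i j)) (mem_univ j₀))

private lemma neg_subsum_le {α : Type*} [Fintype α] (f : α → ℝ) (s : Finset α) :
    -(∑ i ∈ s, f i) ≤ ∑ i : α, |f i| := by
  have h1 : |∑ i ∈ s, f i| ≤ ∑ i ∈ s, |f i| := Finset.abs_sum_le_sum_abs _ _
  have h2 : ∑ i ∈ s, |f i| ≤ ∑ i : α, |f i| :=
    Finset.sum_le_sum_of_subset_of_nonneg (Finset.subset_univ s) (fun i _ _ => abs_nonneg _)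
  linarith [neg_abs_le (∑ i ∈ s, f i)]

private lemma SIset_bddAbove {B S : Type*} [Fintype B] [Fintype S]
    (h : B → S → ℝ) (c : S → ℝ) (u : B → ℝ) (v : S → ℝ) :
    BddAbove {x | ∃ (B' : Finset B) (S' : Finset S) (μ' : Matching B S),
      Within B' S' μ' ∧ x = SW h c μ' - ((∑ i ∈ B', u i) + (∑ j ∈ S', v j))} := by
  refine ⟨(∑ i : B, ∑ j : S, |gain h c i j|) + ((∑ i : B, |u i|) + (∑ j : S, |v j|)), ?_⟩
  rintro x ⟨B', S', μ', -, rfl⟩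
  have h1 := SW_le_bound h c μ'
  have h2 := neg_subsum_le u B'
  have h3 := neg_subsum_le v S'
  linarith

private def emptyMatching (B S : Type*) : Matching B S :=
  ⟨fun _ => none, fun i i' j hi _ => by simp at hi⟩

private lemma SIset_nonempty {B S : Type*} [Fintype B] [Fintype S]
    (h : B → S → ℝ) (c : S → ℝ) (u : B → ℝ) (v : S → ℝ) :
    Set.Nonempty {x | ∃ (B' : Finset B) (S' : Finset S) (μ' : Matching B S),
      Within B' S' μ' ∧ x = SW h c μ' - ((∑ i ∈ B', u i) + (∑ j ∈ S', v j))} := by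
  refine ⟨SW h c (emptyMatching B S) - ((∑ i ∈ (∅ : Finset B), u i) + (∑ j ∈ (∅ : Finset S), v j)),
    ∅, ∅, emptyMatching B S, ?_, rfl⟩
  intro i j hij
  simp [emptyMatching] at hij

/-- Any allocation whose matched pairs generate nonnegative utility can be
re-priced into an individually rational allocation without increasing the
subset instability. -/
theorem exists_IR_prices_SI_le
    {B S : Type*} [Fintype B] [Fintype S]
    (h : B → S → ℝ) (c : S → ℝ)
    (hh : ∀ i j, 0 ≤ h i j) (hc : ∀ j, 0 ≤ c j)
    (μ : Matching B S)
    (hmatched : ∀ i j, μ.toFun i = some j → 0 ≤ gain h c i j)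
    (p : S → ℝ) (hp : ValidPrices c μ p) :
    ∃ p' : S → ℝ, ValidPrices c μ p' ∧ IndivRational h c μ p' ∧
      SI h c μ p' ≤ SI h c μ p := by
  classical
  -- the clamped prices
  set p' : S → ℝ := fun j =>
    if hj : SellerMatched μ j then max (c j) (min (p j) (h hj.choose j)) else c j with hp'def
  -- for a matched pair (i,j), p' j is the clamp of p j into [c j, h i j]
  have hp'eq : ∀ i j, μ.toFun i = some j → p' j = max (c j) (min (p j) (h i j)) := by
    intro i j hij
    have hj : SellerMatched μ j := ⟨i, hij⟩
    have hch : hj.choose = i := μ.inj _ _ j hj.choose_spec hij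
    simp only [hp'def, dif_pos hj, hch]
  have hcle : ∀ i j, μ.toFun i = some j → c j ≤ h i j := by
    intro i j hij
    have := hmatched i j hij
    simp only [gain] at this
    linarith
  have hp'unm : ∀ j, ¬ SellerMatched μ j → p' j = c j := by
    intro j hj; simp only [hp'def, dif_neg hj]
  have hvalid : ValidPrices c μ p' := by
    constructor
    · intro j
      by_cases hj : SellerMatched μ j
      · simp only [hp'def, dif_pos hj]
        exact le_trans (hc j) (le_max_left _ _)
      · rw [hp'unm j hj]; exact hc j
    · exact hp'unm
  have hIR : IndivRational h c μ p' := by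
    constructor
    · intro i
      cases hμ : μ.toFun i with
      | none => simp [buyerU, hμ]
      | some j =>
        have hle := hcle i j hμ
        rw [buyerU, hμ]
        simp only [Option.elim]
        rw [hp'eq i j hμ]
        have : max (c j) (min (p j) (h i j)) ≤ h i j :=
          max_le hle (le_trans (min_le_right _ _) le_rfl)
        linarith
    · intro j
      rw [sellerU]
      by_cases hj : SellerMatched μ j
      · obtain ⟨i, hij⟩ := hj
        rw [hp'eq i j hij]
        linarith [le_max_left (c j) (min (p j) (h i j))]
      · rw [hp'unm j hj]; linarith
  refine ⟨p', hvalid, hIR, ?_⟩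
  -- now the SI comparison
  set u : B → ℝ := buyerU h μ p with hu
  set v : S → ℝ := sellerU c p with hv
  set u' : B → ℝ := buyerU h μ p' with hu'
  set v' : S → ℝ := sellerU c p' with hv'
  rw [SI, SI, SIgen, SIgen]
  apply csSup_le (SIset_nonempty h c u' v')
  rintro x ⟨B', S', μ', hwithin, rfl⟩
  -- the enlarged sub-market
  set Tb : Finset B :=
    univ.filter (fun i => i ∉ B' ∧ ∃ j ∈ S', μ.toFun i = some j ∧ h i j < p j) with hTb
  set Ts : Finset S :=
    univ.filter (fun j => j ∉ S' ∧ ∃ i ∈ B', μ.toFun i = some j ∧ p j < c j) with hTs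
  set B'' : Finset B := B' ∪ Tb with hB''
  set S'' : Finset S := S' ∪ Ts with hS''
  have hwithin' : Within B'' S'' μ' := by
    intro i j hij
    obtain ⟨h1, h2⟩ := hwithin i j hij
    exact ⟨Finset.mem_union_left _ h1, Finset.mem_union_left _ h2⟩
  -- membership characterizations for matched pairs
  have hTbmem : ∀ i j, μ.toFun i = some j → (i ∈ Tb ↔ (i ∉ B' ∧ j ∈ S' ∧ h i j < p j)) := by
    intro i j hij
    simp only [hTb, Finset.mem_filter, mem_univ, true_and]
    constructor
    · rintro ⟨h1, j', hj', hij', h3⟩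
      have : j' = j := by rw [hij] at hij'; exact (Option.some.inj hij').symm
      subst this
      exact ⟨h1, hj', h3⟩
    · rintro ⟨h1, h2, h3⟩
      exact ⟨h1, j, h2, hij, h3⟩
  have hTsmem : ∀ i j, μ.toFun i = some j → (j ∈ Ts ↔ (j ∉ S' ∧ i ∈ B' ∧ p j < c j)) := by
    intro i j hij
    simp only [hTs, Finset.mem_filter, mem_univ, true_and]
    constructor
    · rintro ⟨h1, i', hi', hij', h3⟩
      have : i' = i := μ.inj i' i j hij' hij
      subst this
      exact ⟨h1, hi', h3⟩
    · rintro ⟨h1, h2, h3⟩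
      exact ⟨h1, i, h2, hij, h3⟩
  -- the per-agent deltas
  set t : B → ℝ := fun i =>
    (if i ∈ B'' then u i else 0) - (if i ∈ B' then u' i else 0) with ht
  set s : S → ℝ := fun j =>
    (if j ∈ S'' then v j else 0) - (if j ∈ S' then v' j else 0) with hs
  have hs_unm : ∀ j, ¬ SellerMatched μ j → s j = 0 := by
    intro j hj
    have hv0 : v j = 0 := by simp [hv, sellerU, hp.2 j hj]
    have hv'0 : v' j = 0 := by simp [hv', sellerU, hp'unm j hj]
    simp [hs, hv0, hv'0]
  -- key pairwise inequality
  have hkey : ∀ i, t i + (μ.toFun i).elim 0 s ≤ 0 := by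
    intro i
    cases hμ : μ.toFun i with
    | none =>
      have hu0 : u i = 0 := by simp [hu, buyerU, hμ]
      have hu'0 : u' i = 0 := by simp [hu', buyerU, hμ]
      simp [ht, hμ, hu0, hu'0]
    | some j =>
      simp only [Option.elim]
      have hui : u i = h i j - p j := by simp [hu, buyerU, hμ]
      have hu'i : u' i = h i j - p' j := by simp [hu', buyerU, hμ]
      have hvj : v j = p j - c j := by simp [hv, sellerU]
      have hv'j : v' j = p' j - c j := by simp [hv', sellerU]
      have hcj : c j ≤ h i j := hcle i j hμ
      have hpj : p' j = max (c j) (min (p j) (h i j)) := hp'eq i j hμ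
      have hiB'' : i ∈ B'' ↔ i ∈ B' ∨ i ∈ Tb := Finset.mem_union
      have hjS'' : j ∈ S'' ↔ j ∈ S' ∨ j ∈ Ts := Finset.mem_union
      rw [ht, hs]
      simp only
      by_cases hiB : i ∈ B' <;> by_cases hjS : j ∈ S'
      · -- both in: t + s = (u+v) - (u'+v') = 0
        have h1 : i ∈ B'' := Finset.mem_union_left _ hiB
        have h2 : j ∈ S'' := Finset.mem_union_left _ hjS
        rw [if_pos h1, if_pos hiB, if_pos h2, if_pos hjS]
        rw [hui, hu'i, hvj, hv'j]; ring_nf; linarith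
      · -- i ∈ B', j ∉ S'
        have h1 : i ∈ B'' := Finset.mem_union_left _ hiB
        have hiTb : i ∉ Tb := fun hcon => ((hTbmem i j hμ).mp hcon).1 hiB
        rw [if_pos h1, if_pos hiB, if_neg hjS]
        have hjT : j ∈ S'' ↔ p j < c j := by
          rw [hjS'', hTsmem i j hμ]
          constructor
          · rintro (h' | ⟨-, -, h'⟩); exact absurd h' hjS; exact h'
          · intro h'; exact Or.inr ⟨hjS, hiB, h'⟩
        by_cases hpc : p j < c j
        · rw [if_pos (hjT.mpr hpc)]
          have : p' j = c j := by
            rw [hpj, min_eq_left (by linarith), max_eq_left (by linarith)]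
          rw [hui, hu'i, hvj, this]; ring_nf; linarith
        · rw [if_neg (fun hcon => hpc (hjT.mp hcon))]
          have : p' j ≤ p j := by
            rw [hpj]
            exact max_le (by linarith) (min_le_left _ _)
          rw [hui, hu'i]; linarith
      · -- i ∉ B', j ∈ S'
        have h2 : j ∈ S'' := Finset.mem_union_left _ hjS
        have hjTs : j ∉ Ts := fun hcon => ((hTsmem i j hμ).mp hcon).1 hjS
        rw [if_neg hiB, if_pos h2, if_pos hjS]
        have hiT : i ∈ B'' ↔ h i j < p j := by
          rw [hiB'', hTbmem i j hμ]
          constructor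
          · rintro (h' | ⟨-, -, h'⟩); exact absurd h' hiB; exact h'
          · intro h'; exact Or.inr ⟨hiB, hjS, h'⟩
        by_cases hph : h i j < p j
        · rw [if_pos (hiT.mpr hph)]
          have : p' j = h i j := by
            rw [hpj, min_eq_right (by linarith), max_eq_right (by linarith)]
          rw [hui, hvj, hv'j, this]; ring_nf; linarith
        · rw [if_neg (fun hcon => hph (hiT.mp hcon))]
          have : p j ≤ p' j := by
            rw [hpj, min_eq_left (by linarith)]
            exact le_max_right _ _
          rw [hvj, hv'j]; linarith
      · -- neither
        have hiT : i ∉ B'' := by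
          rw [hiB'']
          rintro (h' | h')
          · exact hiB h'
          · exact hjS ((hTbmem i j hμ).mp h').2.1
        have hjT : j ∉ S'' := by
          rw [hjS'']
          rintro (h' | h')
          · exact hjS h'
          · exact hiB ((hTsmem i j hμ).mp h').2.1
        rw [if_neg hiT, if_neg hiB, if_neg hjT, if_neg hjS]
        simp
  -- sum the deltas
  have hsum : (∑ i ∈ B'', u i) + (∑ j ∈ S'', v j)
      - ((∑ i ∈ B', u' i) + (∑ j ∈ S', v' j)) ≤ 0 := by
    have e1 : ∀ (sb : Finset B) (f : B → ℝ),
        ∑ i ∈ sb, f i = ∑ i : B, (if i ∈ sb then f i else 0) := by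
      intro sb f
      rw [Finset.sum_ite_mem, Finset.univ_inter]
    have e2 : ∀ (ss : Finset S) (f : S → ℝ),
        ∑ j ∈ ss, f j = ∑ j : S, (if j ∈ ss then f j else 0) := by
      intro ss f
      rw [Finset.sum_ite_mem, Finset.univ_inter]
    rw [e1 B'' u, e1 B' u', e2 S'' v, e2 S' v']
    have hts : ∑ j : S, s j = ∑ i : B, (μ.toFun i).elim 0 s := sum_partner' μ s hs_unm
    have : (∑ i : B, t i) + (∑ j : S, s j) ≤ 0 := by
      rw [hts, ← Finset.sum_add_distrib]
      exact Finset.sum_nonpos (fun i _ => hkey i)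
    simp only [ht, hs] at this
    rw [Finset.sum_sub_distrib, Finset.sum_sub_distrib] at this
    linarith
  -- conclude
  have hmem : SW h c μ' - ((∑ i ∈ B'', u i) + (∑ j ∈ S'', v j)) ∈
      {x | ∃ (B₀ : Finset B) (S₀ : Finset S) (μ₀ : Matching B S),
        Within B₀ S₀ μ₀ ∧ x = SW h c μ₀ - ((∑ i ∈ B₀, u i) + (∑ j ∈ S₀, v j))} :=
    ⟨B'', S'', μ', hwithin', rfl⟩
  calc SW h c μ' - ((∑ i ∈ B', u' i) + (∑ j ∈ S', v' j))
      ≤ SW h c μ' - ((∑ i ∈ B'', u i) + (∑ j ∈ S'', v j)) := by linarith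
    _ ≤ _ := le_csSup (SIset_bddAbove h c u v) hmem
end

section
/- Let Γ₁ be the assignment game with buyers {A, Bob}, a single seller D, h ≡ 1 and c ≡ 0 (so every generated utility equals 1), and let Γ₂ be the assignment game with a single buyer A, sellers {D, E}, h ≡ 1 and c ≡ 0. Fix any price q ∈ [0, 1] and consider: in Γ₁ the allocation (μ₁, p₁) that matches only A with D at price q, and in Γ₂ the allocation (μ₂, p₂) that matches only A with D at price q (with E priced at its valuation 0). Then in both games the underlying matching has optimality ratio 1, but max(SI_{Γ₁}(μ₁, p₁), SI_{Γ₂}(μ₂, p₂)) ≥ 1/2; equivalently, min(J_{Γ₁}(μ₁, p₁), J_{Γ₂}(μ₂, p₂)) ≤ 1/2 = (1/2)·λ. -/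
open Finset

variable {B S : Type*} [Fintype B] [Fintype S]

/-- Tightness of the 1/2 stability guarantee: in the two one-unit-valuation
games Γ₁ (buyers A, Bob; seller D) and Γ₂ (buyer A; sellers D, E), matching
only A with D at any price q ∈ [0,1] yields optimal matchings in both games,
yet one of the two allocations has subset instability at least 1/2;
equivalently, one of the two stability indices is at most 1/2. -/
theorem edge_arrival_half_tightness
    (q : ℝ) (hq0 : 0 ≤ q) (hq1 : q ≤ 1)
    (h₁ : Fin 2 → Fin 1 → ℝ) (c₁ : Fin 1 → ℝ)
    (hh₁ : ∀ i j, h₁ i j = 1) (hc₁ : ∀ j, c₁ j = 0)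
    (h₂ : Fin 1 → Fin 2 → ℝ) (c₂ : Fin 2 → ℝ)
    (hh₂ : ∀ i j, h₂ i j = 1) (hc₂ : ∀ j, c₂ j = 0)
    (μ₁ : Matching (Fin 2) (Fin 1))
    (hμ₁ : μ₁.toFun = fun i => if i = 0 then some 0 else none)
    (p₁ : Fin 1 → ℝ) (hp₁ : p₁ = fun _ => q)
    (μ₂ : Matching (Fin 1) (Fin 2))
    (hμ₂ : μ₂.toFun = fun _ => some 0)
    (p₂ : Fin 2 → ℝ) (hp₂ : p₂ = fun j => if j = 0 then q else 0) :
    SW h₁ c₁ μ₁ = OPT h₁ c₁ ∧ SW h₂ c₂ μ₂ = OPT h₂ c₂ ∧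
    (1 : ℝ) / 2 ≤ max (SI h₁ c₁ μ₁ p₁) (SI h₂ c₂ μ₂ p₂) ∧
    min (1 - SI h₁ c₁ μ₁ p₁ / OPT h₁ c₁) (1 - SI h₂ c₂ μ₂ p₂ / OPT h₂ c₂)
      ≤ (1 : ℝ) / 2 := by
  subst hp₁ hp₂
  -- basic facts
  have gain1 : ∀ i j, gain h₁ c₁ i j = 1 := by intro i j; simp [gain, hh₁, hc₁]
  have gain2 : ∀ i j, gain h₂ c₂ i j = 1 := by intro i j; simp [gain, hh₂, hc₂]
  -- SW of any matching is at most 1 in both games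
  have swle1 : ∀ μ : Matching (Fin 2) (Fin 1), SW h₁ c₁ μ ≤ 1 := by
    intro μ
    rcases e0 : μ.toFun 0 with _ | j0 <;> rcases e1 : μ.toFun 1 with _ | j1
    · simp [SW, Fin.sum_univ_two, e0, e1]
    · simp [SW, Fin.sum_univ_two, e0, e1, gain1]
    · simp [SW, Fin.sum_univ_two, e0, e1, gain1]
    · exfalso
      have hj0 : j0 = 0 := Subsingleton.elim _ _
      have hj1 : j1 = 0 := Subsingleton.elim _ _
      have := μ.inj 0 1 0 (by rw [← hj0]; exact e0) (by rw [← hj1]; exact e1)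
      exact absurd this (by decide)
  have swle2 : ∀ μ : Matching (Fin 1) (Fin 2), SW h₂ c₂ μ ≤ 1 := by
    intro μ
    rcases e0 : μ.toFun 0 with _ | j0
    · simp [SW, Fin.sum_univ_one, e0]
    · simp [SW, Fin.sum_univ_one, e0, gain2]
  have sw1 : SW h₁ c₁ μ₁ = 1 := by
    simp [SW, Fin.sum_univ_two, hμ₁, gain1, show (1 : Fin 2) ≠ 0 by decide]
  have sw2 : SW h₂ c₂ μ₂ = 1 := by
    simp [SW, Fin.sum_univ_one, hμ₂, gain2]
  have bdd1 : BddAbove (Set.range (SW h₁ c₁)) := ⟨1, by rintro x ⟨μ, rfl⟩; exact swle1 μ⟩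
  have bdd2 : BddAbove (Set.range (SW h₂ c₂)) := ⟨1, by rintro x ⟨μ, rfl⟩; exact swle2 μ⟩
  have opt1 : OPT h₁ c₁ = 1 := by
    apply le_antisymm
    · exact csSup_le ⟨SW h₁ c₁ μ₁, ⟨μ₁, rfl⟩⟩ (by rintro x ⟨μ, rfl⟩; exact swle1 μ)
    · rw [← sw1]; exact le_csSup bdd1 ⟨μ₁, rfl⟩
  have opt2 : OPT h₂ c₂ = 1 := by
    apply le_antisymm
    · exact csSup_le ⟨SW h₂ c₂ μ₂, ⟨μ₂, rfl⟩⟩ (by rintro x ⟨μ, rfl⟩; exact swle2 μ)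
    · rw [← sw2]; exact le_csSup bdd2 ⟨μ₂, rfl⟩
  -- nonnegativity of utilities
  have bU1 : ∀ i, 0 ≤ buyerU h₁ μ₁ (fun _ => q) i := by
    intro i
    fin_cases i <;>
      simp [buyerU, hμ₁, hh₁, show (1 : Fin 2) ≠ 0 by decide] <;> linarith
  have sU1 : ∀ j, 0 ≤ sellerU c₁ (fun _ => q) j := by
    intro j; simp [sellerU, hc₁]; linarith
  have bU2 : ∀ i, 0 ≤ buyerU h₂ μ₂ (fun j => if j = 0 then q else 0) i := by
    intro i; simp [buyerU, hμ₂, hh₂]; linarith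
  have sU2 : ∀ j, 0 ≤ sellerU c₂ (fun j => if j = 0 then q else 0) j := by
    intro j; fin_cases j <;> simp [sellerU, hc₂] <;> linarith
  -- SI sets are bounded above by 1
  have sibdd1 : BddAbove {x | ∃ (B' : Finset (Fin 2)) (S' : Finset (Fin 1))
      (μ' : Matching (Fin 2) (Fin 1)), Within B' S' μ' ∧
      x = SW h₁ c₁ μ' - ((∑ i ∈ B', buyerU h₁ μ₁ (fun _ => q) i)
        + (∑ j ∈ S', sellerU c₁ (fun _ => q) j))} := by
    refine ⟨1, ?_⟩
    rintro x ⟨B', S', μ', -, rfl⟩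
    have h1 : 0 ≤ ∑ i ∈ B', buyerU h₁ μ₁ (fun _ => q) i :=
      Finset.sum_nonneg fun i _ => bU1 i
    have h2 : 0 ≤ ∑ j ∈ S', sellerU c₁ (fun _ => q) j :=
      Finset.sum_nonneg fun j _ => sU1 j
    have := swle1 μ'
    linarith
  have sibdd2 : BddAbove {x | ∃ (B' : Finset (Fin 1)) (S' : Finset (Fin 2))
      (μ' : Matching (Fin 1) (Fin 2)), Within B' S' μ' ∧
      x = SW h₂ c₂ μ' - ((∑ i ∈ B', buyerU h₂ μ₂ (fun j => if j = 0 then q else 0) i)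
        + (∑ j ∈ S', sellerU c₂ (fun j => if j = 0 then q else 0) j))} := by
    refine ⟨1, ?_⟩
    rintro x ⟨B', S', μ', -, rfl⟩
    have h1 : 0 ≤ ∑ i ∈ B', buyerU h₂ μ₂ (fun j => if j = 0 then q else 0) i :=
      Finset.sum_nonneg fun i _ => bU2 i
    have h2 : 0 ≤ ∑ j ∈ S', sellerU c₂ (fun j => if j = 0 then q else 0) j :=
      Finset.sum_nonneg fun j _ => sU2 j
    have := swle2 μ'
    linarith
  -- a witness deviation in game 1: Bob with D, value 1 - q
  have si1 : 1 - q ≤ SI h₁ c₁ μ₁ (fun _ => q) := by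
    have hmem : (1 - q) ∈ {x | ∃ (B' : Finset (Fin 2)) (S' : Finset (Fin 1))
        (μ' : Matching (Fin 2) (Fin 1)), Within B' S' μ' ∧
        x = SW h₁ c₁ μ' - ((∑ i ∈ B', buyerU h₁ μ₁ (fun _ => q) i)
          + (∑ j ∈ S', sellerU c₁ (fun _ => q) j))} := by
      refine ⟨{1}, {0}, ⟨fun i => if i = 1 then some 0 else none, by decide⟩, ?_, ?_⟩
      · intro i j hij
        by_cases hi : i = 1
        · subst hi
          constructor
          · exact Finset.mem_singleton_self _
          · simp [Finset.mem_singleton, Subsingleton.elim j 0]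
        · simp [hi] at hij
      · have hB : buyerU h₁ μ₁ (fun _ => q) 1 = 0 := by
          simp [buyerU, hμ₁, show (1 : Fin 2) ≠ 0 by decide]
        have hS : sellerU c₁ (fun _ => q) 0 = q := by simp [sellerU, hc₁]
        have hsw : SW h₁ c₁ ⟨fun i => if i = 1 then some 0 else none,
            by decide⟩ = 1 := by
          simp [SW, Fin.sum_univ_two, gain1, show (0 : Fin 2) ≠ 1 by decide]
        rw [hsw, Finset.sum_singleton, Finset.sum_singleton, hB, hS]
        ring
    exact le_csSup sibdd1 hmem
  -- a witness deviation in game 2: A with E, value q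
  have si2 : q ≤ SI h₂ c₂ μ₂ (fun j => if j = 0 then q else 0) := by
    have hmem : q ∈ {x | ∃ (B' : Finset (Fin 1)) (S' : Finset (Fin 2))
        (μ' : Matching (Fin 1) (Fin 2)), Within B' S' μ' ∧
        x = SW h₂ c₂ μ' - ((∑ i ∈ B', buyerU h₂ μ₂ (fun j => if j = 0 then q else 0) i)
          + (∑ j ∈ S', sellerU c₂ (fun j => if j = 0 then q else 0) j))} := by
      refine ⟨{0}, {1}, ⟨fun _ => some 1,
        fun i i' j _ _ => Subsingleton.elim i i'⟩, ?_, ?_⟩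
      · intro i j hij
        have : j = 1 := by simpa using hij.symm
        subst this
        exact ⟨by simp [Finset.mem_singleton, Subsingleton.elim i 0],
          Finset.mem_singleton_self _⟩
      · have hB : buyerU h₂ μ₂ (fun j => if j = 0 then q else 0) 0 = 1 - q := by
          simp [buyerU, hμ₂, hh₂]
        have hS : sellerU c₂ (fun j => if j = 0 then q else 0) 1 = 0 := by
          simp [sellerU, hc₂, show (1 : Fin 2) ≠ 0 by decide]
        have hsw : SW h₂ c₂ ⟨fun _ => some 1,
            fun i i' j _ _ => Subsingleton.elim i i'⟩ = 1 := by
          simp [SW, Fin.sum_univ_one, gain2]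
        rw [hsw, Finset.sum_singleton, Finset.sum_singleton, hB, hS]
        ring
    exact le_csSup sibdd2 hmem
  refine ⟨by rw [sw1, opt1], by rw [sw2, opt2], ?_, ?_⟩
  · rcases le_total q (1/2) with hq | hq
    · exact le_max_of_le_left (by linarith)
    · exact le_max_of_le_right (by linarith)
  · rw [opt1, opt2]
    rcases le_total q (1/2) with hq | hq
    · refine min_le_of_left_le ?_
      have := si1
      simp only [div_one]
      linarith
    · refine min_le_of_right_le ?_
      have := si2
      simp only [div_one]
      linarith
end
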